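/- arXiv:1603.07197 — 5 statements merged into one kernel-verified Lean document; each statement's English description precedes it below -/
import Mathlib

section
/- Let G be a discrete group and p a prime. The natural map H^2(Ĝ_(p); Z/p) → H^2(G; Z/p) induced by G → Ĝ_(p) is injective. Concretely: if a central extension 1 → Z/p → H → Ĝ_(p) → 1 of pro-p groups pulls back along G → Ĝ_(p) to a split central extension of G by Z/p, then the original extension splits (admits a continuous group-theoretic section). -/
/-- A topological group is a pro-`p` group if it is a compact, Hausdorff, totally
disconnected topological group all of whose continuous finite quotients are `p`-groups. -/
structure IsProPGroup (p : ℕ) (K : Type*) [Group K] [TopologicalSpace K] : Prop where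
  topGroup : IsTopologicalGroup K
  compact : CompactSpace K
  t2 : T2Space K
  totallyDisconnected : TotallyDisconnectedSpace K
  quot_isPGroup : ∀ (N : Subgroup K) [N.Normal], IsOpen (N : Set K) → IsPGroup p (K ⧸ N)

/-- `ι : G →* K` exhibits the pro-`p` group `K` as the pro-`p` completion of the
discrete group `G`. -/
structure IsProPCompletion (p : ℕ) (G : Type*) [Group G] (K : Type*) [Group K]
    [TopologicalSpace K] (ι : G →* K) : Prop where
  proP : IsProPGroup p K
  dense : DenseRange ι
  universal : ∀ (F : Type) [Group F] [Finite F] [TopologicalSpace F] [DiscreteTopology F],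
    IsPGroup p F → ∀ f : G →* F, ∃! φ : K →* F, Continuous φ ∧ φ.comp ι = f

/-- The pull-back `P = {(g,h) ∈ G × H : ι g = π h}` of a pair of homomorphisms
`ι : G →* K`, `π : H →* K`, as a subgroup of `G × H`. -/
def extensionPullback {G H K : Type*} [Group G] [Group H] [Group K]
    (ι : G →* K) (π : H →* K) : Subgroup (G × H) where
  carrier := {x | ι x.1 = π x.2}
  one_mem' := by simp
  mul_mem' := by
    intro a b ha hb
    simp only [Set.mem_setOf_eq, Prod.fst_mul, Prod.snd_mul, map_mul] at *
    rw [ha, hb]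
  inv_mem' := by
    intro a ha
    simp only [Set.mem_setOf_eq, Prod.fst_inv, Prod.snd_inv, map_inv] at *
    rw [ha]

/-- The natural map `H²(Ĝ₍ₚ₎; ℤ/p) → H²(G; ℤ/p)` is injective:
if a central extension `1 → ℤ/p → H → Ĝ₍ₚ₎ → 1` of pro-`p` groups pulls back along
`ι : G → Ĝ₍ₚ₎` to a split central extension of `G` by `ℤ/p`, then the original
extension admits a continuous group-theoretic section. -/
theorem h2_proPCompletion_injective (p : ℕ) [Fact p.Prime]
    (G : Type) [Group G] (K : Type) [Group K] [TopologicalSpace K]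
    (ι : G →* K) (hK : IsProPCompletion p G K ι)
    (H : Type) [Group H] [TopologicalSpace H] (hH : IsProPGroup p H)
    (π : H →* K) (hπcont : Continuous π) (hπsurj : Function.Surjective π)
    (hcentral : π.ker ≤ Subgroup.center H) (hcard : Nat.card π.ker = p)
    (hsplit : ∃ s : G →* (extensionPullback ι π), ∀ g : G, ((s g : G × H).1) = g) :
    ∃ σ : K →* H, Continuous σ ∧ π.comp σ = MonoidHom.id K := by
  classical
  obtain ⟨s, hs⟩ := hsplit
  haveI := hK.proP.topGroup
  haveI := hK.proP.compact
  haveI := hK.proP.t2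
  haveI := hH.topGroup
  haveI := hH.compact
  haveI := hH.t2
  haveI := hH.totallyDisconnected
  -- the lift `t : G →* H` coming from the splitting of the pullback
  set t : G →* H :=
    (MonoidHom.snd G H).comp ((extensionPullback ι π).subtype.comp s) with ht
  have hπt : ∀ g : G, π (t g) = ι g := by
    intro g
    have hmem : ι ((s g : G × H)).1 = π ((s g : G × H)).2 := (s g).2
    have : t g = ((s g : G × H)).2 := rfl
    rw [this, ← hmem, hs g]
  -- the kernel is finite
  haveI hfinker : Finite π.ker := by
    refine Nat.finite_of_card_ne_zero ?_
    rw [hcard]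
    exact (Fact.out : p.Prime).pos.ne'
  -- find an open normal subgroup `N` meeting the kernel trivially
  have hFfin : ((π.ker : Set H) \ {1}).Finite := by
    have : (π.ker : Set H).Finite := Set.toFinite _
    exact this.diff
  have hUopen : IsOpen (((π.ker : Set H) \ {1})ᶜ) := hFfin.isClosed.isOpen_compl
  have h1U : (1 : H) ∈ ((π.ker : Set H) \ {1})ᶜ := by
    simp
  obtain ⟨V, hVclopen, h1V, hVU⟩ := compact_exists_isClopen_in_isOpen hUopen h1U
  obtain ⟨N, hNV⟩ :=
    IsTopologicalGroup.exist_openNormalSubgroup_sub_clopen_nhds_of_one hVclopen h1V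
  have hNker : ∀ h : H, h ∈ (N : Subgroup H) → h ∈ π.ker → h = 1 := by
    intro h hN hker
    by_contra hne
    exact (hVU (hNV hN)) ⟨hker, hne⟩
  -- the finite p-group quotient
  have hNopen : IsOpen ((N : Subgroup H) : Set H) := N.toOpenSubgroup.isOpen
  haveI : DiscreteTopology (H ⧸ (N : Subgroup H)) :=
    QuotientGroup.discreteTopology hNopen
  haveI : Finite (H ⧸ (N : Subgroup H)) :=
    Subgroup.quotient_finite_of_isOpen _ hNopen
  have hpQ : IsPGroup p (H ⧸ (N : Subgroup H)) := hH.quot_isPGroup _ hNopen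
  set mk : H →* H ⧸ (N : Subgroup H) := QuotientGroup.mk' (N : Subgroup H) with hmk
  have hmkcont : Continuous mk := QuotientGroup.continuous_mk
  -- extend `mk ∘ t` to `K` by the universal property
  obtain ⟨φ, ⟨hφcont, hφι⟩, -⟩ :=
    hK.universal (H ⧸ (N : Subgroup H)) hpQ (mk.comp t)
  -- uniqueness of elements with prescribed image under `π` and `mk`
  have huniq : ∀ h h' : H, π h = π h' → mk h = mk h' → h = h' := by
    intro h h' h1 h2
    have hk : h⁻¹ * h' ∈ π.ker := by
      rw [MonoidHom.mem_ker, map_mul, map_inv, h1, inv_mul_cancel]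
    have hn : h⁻¹ * h' ∈ (N : Subgroup H) := (QuotientGroup.eq ).mp h2
    have := hNker _ hn hk
    rw [inv_mul_eq_one] at this
    exact this
  -- existence of elements with prescribed image under `π` and `mk`
  have hex : ∀ k : K, ∃ h : H, π h = k ∧ mk h = φ k := by
    have hC : IsClosed {h : H | mk h = φ (π h)} :=
      isClosed_eq hmkcont (hφcont.comp hπcont)
    have him : IsClosed (π '' {h : H | mk h = φ (π h)}) :=
      (hC.isCompact.image hπcont).isClosed
    have hsub : Set.range ι ⊆ π '' {h : H | mk h = φ (π h)} := by
      rintro _ ⟨g, rfl⟩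
      refine ⟨t g, ?_, hπt g⟩
      show mk (t g) = φ (π (t g))
      rw [hπt g]
      exact (DFunLike.congr_fun hφι g).symm
    have : Set.univ ⊆ π '' {h : H | mk h = φ (π h)} := by
      have hd : Dense (Set.range ι) := hK.dense
      rw [← him.closure_eq]
      intro x _
      exact closure_mono hsub (hd x)
    intro k
    obtain ⟨h, hmem, hπh⟩ := this (Set.mem_univ k)
    exact ⟨h, hπh, by rw [hmem, hπh]⟩
  choose σ hσπ hσmk using hex
  have hσ1 : σ 1 = 1 := by
    refine huniq _ _ ?_ ?_
    · rw [hσπ, map_one]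
    · rw [hσmk, map_one, map_one]
  have hσmul : ∀ a b : K, σ (a * b) = σ a * σ b := by
    intro a b
    refine huniq _ _ ?_ ?_
    · rw [hσπ, map_mul, hσπ, hσπ]
    · rw [hσmk, map_mul, map_mul, hσmk, hσmk]
  refine ⟨⟨⟨σ, hσ1⟩, hσmul⟩, ?_, ?_⟩
  · -- continuity via the closed embedding `h ↦ (π h, mk h)`
    have hΦcont : Continuous (fun h : H => (π h, mk h)) :=
      hπcont.prodMk hmkcont
    have hΦinj : Function.Injective (fun h : H => (π h, mk h)) := by
      intro h h' hhh
      exact huniq h h' (congrArg Prod.fst hhh) (congrArg Prod.snd hhh)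
    have hemb := (hΦcont.isClosedEmbedding hΦinj).toIsEmbedding
    have : Continuous σ := by
      rw [hemb.continuous_iff]
      have hcomp : ((fun h : H => (π h, mk h)) ∘ σ) = fun k => (k, φ k) :=
        funext fun k => Prod.ext (hσπ k) (hσmk k)
      rw [hcomp]
      exact continuous_id.prodMk hφcont
    exact this
  · ext k
    exact hσπ k
end

section
/- Let 1 → Z/p → H → Ĝ_(p) → 1 be a central extension of the pro-p completion of a discrete group G by Z/p, and let P be its pull-back along ι: G → Ĝ_(p). If the pull-back extension of G splits, then H is isomorphic, as a topological group over Ĝ_(p), to the pro-p completion of P. -/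
/-- Let `1 → ℤ/p → H → Ĝ₍ₚ₎ → 1` be a central extension of the pro-`p`
completion of a discrete group `G` by `ℤ/p`, and let `P` be its pull-back along
`ι : G → Ĝ₍ₚ₎`. If the pull-back extension of `G` splits, then `H`, via the (second)
projection `P → H`, is the pro-`p` completion of `P`; in particular `H` is isomorphic
as a topological group over `Ĝ₍ₚ₎` to the pro-`p` completion of `P`. -/
theorem proPCompletion_of_pullback (p : ℕ) [Fact p.Prime]
    (G : Type) [Group G] [TopologicalSpace G] [DiscreteTopology G]
    (K : Type) [Group K] [TopologicalSpace K]
    (ι : G →* K) (hK : IsProPCompletion p G K ι)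
    (H : Type) [Group H] [TopologicalSpace H] (hH : IsProPGroup p H)
    (π : H →* K) (hπcont : Continuous π) (hπsurj : Function.Surjective π)
    (hcentral : π.ker ≤ Subgroup.center H) (hcard : Nat.card π.ker = p)
    (hsplit : ∃ s : G →* (extensionPullback ι π), ∀ g : G, ((s g : G × H).1) = g) :
    IsProPCompletion p (extensionPullback ι π) H
      ((MonoidHom.snd G H).comp (extensionPullback ι π).subtype) := by
  classical
  obtain ⟨s, hs⟩ := hsplit
  haveI := hH.topGroup
  haveI := hH.compact
  haveI := hH.t2
  haveI := hH.totallyDisconnected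
  haveI := hK.proP.topGroup
  haveI := hK.proP.t2
  have hp : p.Prime := Fact.out
  -- the splitting on the H side
  set t : G →* H := (MonoidHom.snd G H).comp ((extensionPullback ι π).subtype.comp s) with ht
  have hπt : ∀ g, π (t g) = ι g := by
    intro g
    have hmem := (s g).2
    have h1 : ((s g : G × H)).1 = g := hs g
    simp only [extensionPullback, Subgroup.mem_mk, Set.mem_setOf_eq] at hmem
    have h2 : π ((s g : G × H)).2 = ι ((s g : G × H)).1 := hmem.symm
    rw [h1] at h2
    exact h2
  -- the closure C of the image of t
  set C : Subgroup H := t.range.topologicalClosure with hC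
  have hCclosed : IsClosed (C : Set H) := Subgroup.isClosed_topologicalClosure _
  have htC : ∀ g, t g ∈ C := fun g =>
    Subgroup.le_topologicalClosure _ ⟨g, rfl⟩
  -- π maps C onto K
  have hπC : ∀ k : K, ∃ c ∈ C, π c = k := by
    have hcpt : IsCompact (π '' (C : Set H)) :=
      (hCclosed.isCompact).image hπcont
    have hcl : IsClosed (π '' (C : Set H)) := hcpt.isClosed
    have hsub : Set.range ι ⊆ π '' (C : Set H) := by
      rintro - ⟨g, rfl⟩
      exact ⟨t g, htC g, hπt g⟩
    have : (Set.univ : Set K) ⊆ π '' (C : Set H) := by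
      rw [← hcl.closure_eq]
      intro k _
      exact closure_mono hsub (hK.dense k)
    intro k
    obtain ⟨c, hc, hck⟩ := this (Set.mem_univ k)
    exact ⟨c, hc, hck⟩
  -- decomposition H = C · ker π
  have hdecomp : ∀ h : H, ∃ z, z ∈ π.ker ∧ h * z⁻¹ ∈ C := by
    intro h
    obtain ⟨c, hc, hck⟩ := hπC (π h)
    refine ⟨c⁻¹ * h, ?_, ?_⟩
    · simp [MonoidHom.mem_ker, hck]
    · simpa [mul_assoc] using hc
  -- KEY: C ∩ ker π = 1
  have hker_meet : ∀ z, z ∈ π.ker → z ∈ C → z = 1 := by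
    intro z hz hzC
    by_contra hzne
    haveI : Finite π.ker := (Nat.card_pos_iff.mp (by rw [hcard]; exact hp.pos)).2
    have hordz : orderOf z = p := by
      have hdvd : orderOf z ∣ p := hcard ▸ Subgroup.orderOf_dvd_natCard π.ker hz
      rcases hp.eq_one_or_self_of_dvd _ hdvd with h | h
      · exact absurd (orderOf_eq_one_iff.mp h) hzne
      · exact h
    have hZeq : Subgroup.zpowers z = π.ker :=
      Subgroup.eq_of_le_of_card_ge (Subgroup.zpowers_le.mpr hz)
        (by rw [hcard, Nat.card_zpowers, hordz])
    have hZC : π.ker ≤ C := hZeq ▸ Subgroup.zpowers_le.mpr hzC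
    have hCtop : ∀ h : H, h ∈ C := by
      intro h
      obtain ⟨w, hwk, hwC⟩ := hdecomp h
      have : h * w⁻¹ * w ∈ C := mul_mem hwC (hZC hwk)
      simpa using this
    have hdense : DenseRange t := by
      have hset : (C : Set H) = closure (Set.range t) := by
        simp [hC, Subgroup.topologicalClosure]
      rw [DenseRange, Dense.eq_1]
      intro x
      rw [← hset]
      exact hCtop x
    -- every open normal subgroup contains ker π
    have hNall : ∀ (N : Subgroup H), N.Normal → IsOpen (N : Set H) → π.ker ≤ N := by
      intro N hNnorm hNopen
      haveI := hNnorm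
      haveI : DiscreteTopology (H ⧸ N) := QuotientGroup.discreteTopology hNopen
      haveI : Finite (H ⧸ N) := N.quotient_finite_of_isOpen hNopen
      obtain ⟨ψ, ⟨hψc, hψι⟩, -⟩ := hK.universal (H ⧸ N) (hH.quot_isPGroup N hNopen)
        ((QuotientGroup.mk' N).comp t)
      have heq : ⇑(QuotientGroup.mk' N) = ⇑ψ ∘ ⇑π := by
        refine hdense.equalizer continuous_quotient_mk' (hψc.comp hπcont) ?_
        funext g
        show QuotientGroup.mk' N (t g) = ψ (π (t g))
        rw [hπt g]
        exact (DFunLike.congr_fun hψι g).symm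
      intro w hw
      have h1 : (QuotientGroup.mk' N) w = 1 := by
        rw [show ((QuotientGroup.mk' N) w : H ⧸ N) = ψ (π w) from congrFun heq w,
          MonoidHom.mem_ker.mp hw, map_one]
      exact (QuotientGroup.eq_one_iff w).mp h1
    -- but some open normal subgroup misses z
    have hconn : connectedComponent (1 : H) = {1} :=
      totallyDisconnectedSpace_iff_connectedComponent_singleton.mp ‹_› 1
    have hzncc : z ∉ connectedComponent (1 : H) := by
      rw [hconn]; simpa using hzne
    rw [connectedComponent_eq_iInter_isClopen, Set.mem_iInter] at hzncc
    push_neg at hzncc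
    obtain ⟨⟨U, hUclopen, hU1⟩, hzU⟩ := hzncc
    obtain ⟨N, hNU⟩ :=
      IsTopologicalGroup.exist_openNormalSubgroup_sub_clopen_nhds_of_one hUclopen hU1
    exact hzU (hNU (hNall N.toSubgroup N.isNormal' N.isOpen' hz))
  haveI hkerfin : Finite π.ker := by
    refine (Nat.card_pos_iff.mp ?_).2
    rw [hcard]; exact hp.pos
  -- uniqueness of the kernel part of the decomposition
  have huniq : ∀ (h z z' : H), z ∈ π.ker → z' ∈ π.ker → h * z⁻¹ ∈ C → h * z'⁻¹ ∈ C →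
      z = z' := by
    intro h z z' hz hz' hc hc'
    have hmemC : z' * z⁻¹ ∈ C := by
      have h2 := mul_mem (inv_mem hc') hc
      have h3 : (h * z'⁻¹)⁻¹ * (h * z⁻¹) = z' * z⁻¹ := by group
      rwa [h3] at h2
    have := hker_meet _ (mul_mem hz' (inv_mem hz)) hmemC
    exact (mul_inv_eq_one.mp this).symm
  choose ζ hζker hζC using hdecomp
  have hζeq : ∀ (h z : H), z ∈ π.ker → h * z⁻¹ ∈ C → ζ h = z := fun h z hz hc =>
    huniq h (ζ h) z (hζker h) hz (hζC h) hc
  have hζone : ζ 1 = 1 := hζeq 1 1 (one_mem _) (by simpa using one_mem C)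
  have hζmul : ∀ a b : H, ζ (a * b) = ζ a * ζ b := by
    intro a b
    apply hζeq
    · exact mul_mem (hζker a) (hζker b)
    · have hcen := Subgroup.mem_center_iff.mp (hcentral (inv_mem (hζker a)))
      have heq2 : a * b * (ζ a * ζ b)⁻¹ = a * ((b * (ζ b)⁻¹) * (ζ a)⁻¹) := by group
      rw [heq2, hcen (b * (ζ b)⁻¹), ← mul_assoc]
      exact mul_mem (hζC a) (hζC b)
  -- fibers of ζ
  have hfiber : ∀ z : H, z ∈ π.ker → ζ ⁻¹' {z} = (fun x => x * z⁻¹) ⁻¹' (C : Set H) := by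
    intro z hz
    ext x
    simp only [Set.mem_preimage, Set.mem_singleton_iff, SetLike.mem_coe]
    constructor
    · rintro rfl; exact hζC x
    · intro hx; exact hζeq x z hz hx
  have hfiberClosed : ∀ z : H, IsClosed (ζ ⁻¹' {z}) := by
    intro z
    by_cases hz : z ∈ π.ker
    · rw [hfiber z hz]
      exact hCclosed.preimage (continuous_id.mul continuous_const)
    · have : ζ ⁻¹' {z} = ∅ := by
        ext x
        simp only [Set.mem_preimage, Set.mem_singleton_iff, Set.mem_empty_iff_false,
          iff_false]
        intro h
        exact hz (h ▸ hζker x)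
      rw [this]; exact isClosed_empty
  have hfiberOpen : ∀ z : π.ker, IsOpen (ζ ⁻¹' {(z : H)}) := by
    intro z
    have hcompl : ζ ⁻¹' {(z : H)} =
        (⋃ w : {w : π.ker // w ≠ z}, ζ ⁻¹' {((w : π.ker) : H)})ᶜ := by
      ext x
      simp only [Set.mem_preimage, Set.mem_singleton_iff, Set.mem_compl_iff,
        Set.mem_iUnion, not_exists]
      constructor
      · intro hx w hw
        exact w.2 (Subtype.ext (by rw [← hw, hx]))
      · intro hx
        by_contra hne
        exact hx ⟨⟨ζ x, hζker x⟩, fun hc => hne (by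
          have := congrArg Subtype.val hc
          simpa using this)⟩ rfl
    rw [hcompl]
    exact (isClosed_iUnion_of_finite fun w => hfiberClosed _).isOpen_compl
  haveI : DiscreteTopology ↥π.ker := inferInstance
  have hζ'cont : Continuous (fun h : H => (⟨ζ h, hζker h⟩ : π.ker)) := by
    rw [continuous_discrete_rng]
    intro z
    have : (fun h : H => (⟨ζ h, hζker h⟩ : π.ker)) ⁻¹' {z} = ζ ⁻¹' {(z : H)} := by
      ext x
      simp [Subtype.ext_iff]
    rw [this]
    exact hfiberOpen z
  -- the embedding of ker π into the pull-back
  have hkermem : ∀ z : π.ker, ((1 : G), (z : H)) ∈ extensionPullback ι π := by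
    intro z
    show ι 1 = π (z : H)
    rw [map_one, MonoidHom.mem_ker.mp z.2]
  set e : π.ker →* extensionPullback ι π :=
    { toFun := fun z => ⟨((1 : G), (z : H)), hkermem z⟩
      map_one' := by ext <;> simp
      map_mul' := by intro z w; ext <;> simp } with he
  -- density of the range of j
  have hjrange_t : ∀ g : G, t g ∈ MonoidHom.range
      ((MonoidHom.snd G H).comp (extensionPullback ι π).subtype) := fun g => ⟨s g, rfl⟩
  have hjrange_z : ∀ z : π.ker, (z : H) ∈ MonoidHom.range
      ((MonoidHom.snd G H).comp (extensionPullback ι π).subtype) := fun z => ⟨e z, rfl⟩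
  have hjdense : DenseRange ⇑((MonoidHom.snd G H).comp (extensionPullback ι π).subtype) := by
    set D := ((MonoidHom.snd G H).comp (extensionPullback ι π).subtype).range.topologicalClosure
      with hD
    have hCD : C ≤ D := by
      apply Subgroup.topologicalClosure_minimal
      · rintro - ⟨g, rfl⟩
        exact Subgroup.le_topologicalClosure _ (hjrange_t g)
      · exact Subgroup.isClosed_topologicalClosure _
    have hDtop : ∀ h : H, h ∈ D := by
      intro h
      have h1 : h * (ζ h)⁻¹ ∈ D := hCD (hζC h)
      have h2 : ζ h ∈ D := Subgroup.le_topologicalClosure _ (hjrange_z ⟨ζ h, hζker h⟩)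
      simpa using mul_mem h1 h2
    intro x
    have hset : (D : Set H) = closure (Set.range
        ⇑((MonoidHom.snd G H).comp (extensionPullback ι π).subtype)) := by
      simp [hD, Subgroup.topologicalClosure]
    rw [← hset]
    exact hDtop x
  refine ⟨hH, hjdense, ?_⟩
  intro F _ _ _ _ hF f
  obtain ⟨ψ, ⟨hψc, hψι⟩, -⟩ := hK.universal F hF (f.comp s)
  have hψval : ∀ g : G, ψ (ι g) = f (s g) := fun g => DFunLike.congr_fun hψι g
  have hψrange : ∀ k : K, ∃ g : G, ψ k = f (s g) := by
    intro k
    have h1 : ψ k ∈ closure (⇑ψ '' Set.range ι) :=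
      image_closure_subset_closure_image hψc (Set.mem_image_of_mem ψ (hK.dense k))
    rw [IsClosed.closure_eq (isClosed_discrete _)] at h1
    obtain ⟨-, ⟨g, rfl⟩, hg⟩ := h1
    exact ⟨g, by rw [← hg, hψval g]⟩
  have hecomm : ∀ (z : π.ker) (x : extensionPullback ι π), e z * x = x * e z := by
    intro z x
    ext
    · show ((1 : G) * (x : G × H).1) = ((x : G × H).1 * 1)
      rw [one_mul, mul_one]
    · show ((z : H) * (x : G × H).2) = ((x : G × H).2 * (z : H))
      exact (Subgroup.mem_center_iff.mp (hcentral z.2) _).symm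
  have hcomm : ∀ (z : π.ker) (k : K), f (e z) * ψ k = ψ k * f (e z) := by
    intro z k
    obtain ⟨g, hg⟩ := hψrange k
    rw [hg, ← map_mul, ← map_mul, hecomm]
  set φ : H →* F :=
    { toFun := fun h => ψ (π h) * f (e ⟨ζ h, hζker h⟩)
      map_one' := by
        have : (⟨ζ 1, hζker 1⟩ : π.ker) = 1 := Subtype.ext hζone
        simp [this]
      map_mul' := by
        intro a b
        have hz : (⟨ζ (a * b), hζker (a * b)⟩ : π.ker) =
            ⟨ζ a, hζker a⟩ * ⟨ζ b, hζker b⟩ := Subtype.ext (hζmul a b)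
        simp only [hz, map_mul]
        have hc := hcomm ⟨ζ a, hζker a⟩ (π b)
        rw [mul_assoc]
        conv_rhs => rw [mul_assoc, ← mul_assoc (f (e ⟨ζ a, hζker a⟩)), hc, mul_assoc]
         } with hφ
  have hφcont : Continuous ⇑φ := by
    have h1 : Continuous fun h : H => ψ (π h) := hψc.comp hπcont
    have h2 : Continuous fun h : H => f (e ⟨ζ h, hζker h⟩) :=
      (continuous_of_discreteTopology (f := fun z : π.ker => f (e z))).comp hζ'cont
    exact h1.mul h2
  have hφj : φ.comp ((MonoidHom.snd G H).comp (extensionPullback ι π).subtype) = f := by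
    ext x
    have hx : ι (x : G × H).1 = π (x : G × H).2 := x.2
    have hzx : ζ (x : G × H).2 = (t (x : G × H).1)⁻¹ * (x : G × H).2 := by
      apply hζeq
      · show (t (x : G × H).1)⁻¹ * (x : G × H).2 ∈ π.ker
        rw [MonoidHom.mem_ker, map_mul, map_inv, hπt, hx, inv_mul_cancel]
      · have hgrp : (x : G × H).2 * ((t (x : G × H).1)⁻¹ * (x : G × H).2)⁻¹ =
            t (x : G × H).1 := by group
        rw [hgrp]; exact htC _
    show ψ (π (x : G × H).2) * f (e ⟨ζ (x : G × H).2, hζker _⟩) = f x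
    have h1 : ψ (π (x : G × H).2) = f (s (x : G × H).1) := by rw [← hx, hψval]
    have h2 : s (x : G × H).1 * e ⟨ζ (x : G × H).2, hζker _⟩ = x := by
      ext
      · show (s (x : G × H).1 : G × H).1 * 1 = (x : G × H).1
        rw [hs, mul_one]
      · show t (x : G × H).1 * ζ (x : G × H).2 = (x : G × H).2
        rw [hzx]; group
    rw [h1, ← map_mul, h2]
  refine ⟨φ, ⟨hφcont, hφj⟩, ?_⟩
  rintro φ' ⟨hφ'c, hφ'j⟩
  apply DFunLike.ext'
  refine hjdense.equalizer hφ'c hφcont ?_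
  funext x
  show φ' (((MonoidHom.snd G H).comp (extensionPullback ι π).subtype) x) =
    φ (((MonoidHom.snd G H).comp (extensionPullback ι π).subtype) x)
  rw [show φ' _ = f x from DFunLike.congr_fun hφ'j x,
    show φ _ = f x from DFunLike.congr_fun hφj x]
end

section
/- Let Γ be a finite simplicial graph and A(Γ) the associated right-angled Artin group. For each vertex v, let f_v ∈ H^1(A(Γ); Q) = Hom(A(Γ), Q) be the homomorphism sending v to 1 and every other vertex generator to 0. Then for vertices v ≠ w, the cup product f_v ⌣ f_w ∈ H^2(A(Γ); Q) is nonzero if and only if v and w are adjacent in Γ. -/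
open scoped commutatorElement

/-- The defining relations of the right-angled Artin group on a graph `Γ`:
commutators of generators spanning an edge. -/
def raagRels {V : Type*} (Γ : SimpleGraph V) : Set (FreeGroup V) :=
  {r | ∃ v w : V, Γ.Adj v w ∧ r = ⁅FreeGroup.of v, FreeGroup.of w⁆}

/-- The right-angled Artin group `A(Γ)` of a graph `Γ`. -/
def RAAG {V : Type*} (Γ : SimpleGraph V) : Type _ := PresentedGroup (raagRels Γ)

instance {V : Type*} (Γ : SimpleGraph V) : Group (RAAG Γ) :=
  QuotientGroup.Quotient.group _

/-- The generator of `A(Γ)` corresponding to a vertex. -/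
def RAAG.gen {V : Type*} (Γ : SimpleGraph V) (v : V) : RAAG Γ :=
  PresentedGroup.of (rels := raagRels Γ) v

/-- The defining relations of the right-angled Coxeter group on a graph `Γ`:
edge commutators together with the squares of all generators. -/
def racgRels {V : Type*} (Γ : SimpleGraph V) : Set (FreeGroup V) :=
  raagRels Γ ∪ {r | ∃ v : V, r = (FreeGroup.of v) ^ 2}

/-- The right-angled Coxeter group `C(Γ)` of a graph `Γ`. -/
def RACG {V : Type*} (Γ : SimpleGraph V) : Type _ := PresentedGroup (racgRels Γ)

instance {V : Type*} (Γ : SimpleGraph V) : Group (RACG Γ) :=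
  QuotientGroup.Quotient.group _

/-- The generator of `C(Γ)` corresponding to a vertex. -/
def RACG.gen {V : Type*} (Γ : SimpleGraph V) (v : V) : RACG Γ :=
  PresentedGroup.of (rels := racgRels Γ) v
section GroupCohomologyLowDim

variable (k : Type*) [CommRing k] (G : Type*) [Group G]

/-- `H¹(G; k)` with trivial coefficients: additive homomorphisms `G → k`,
as a `k`-module. -/
def H1 : Submodule k (G → k) where
  carrier := {f | ∀ x y : G, f (x * y) = f x + f y}
  add_mem' := by
    intro f g hf hg x y
    simp only [Pi.add_apply, hf x y, hg x y]; ring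
  zero_mem' := by intro x y; simp
  smul_mem' := by
    intro a f hf x y
    simp only [Pi.smul_apply, smul_eq_mul, hf x y]; ring

variable {k G} in
/-- The (inhomogeneous) 2-cocycle condition for trivial coefficients. -/
def IsTwoCocycle (c : G → G → k) : Prop :=
  ∀ x y z : G, c y z - c (x * y) z + c x (y * z) - c x y = 0

variable {k G} in
/-- The (inhomogeneous) 2-coboundary condition for trivial coefficients. -/
def IsTwoCoboundary (c : G → G → k) : Prop :=
  ∃ f : G → k, ∀ x y : G, c x y = f x - f (x * y) + f y

/-- The `k`-module of 2-cocycles on `G` with trivial coefficients. -/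
def twoCocycles : Submodule k (G → G → k) where
  carrier := {c | IsTwoCocycle c}
  add_mem' := by
    intro c d hc hd x y z
    have h1 := hc x y z
    have h2 := hd x y z
    simp only [Pi.add_apply]
    linear_combination h1 + h2
  zero_mem' := by intro x y z; simp
  smul_mem' := by
    intro a c hc x y z
    have h1 := hc x y z
    simp only [Pi.smul_apply, smul_eq_mul]
    linear_combination a * h1

/-- The 2-coboundaries, as a submodule of the 2-cocycles. -/
def twoCoboundariesIn : Submodule k (twoCocycles k G) where
  carrier := {c | IsTwoCoboundary (c : G → G → k)}
  add_mem' := by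
    rintro c d ⟨f, hf⟩ ⟨g, hg⟩
    exact ⟨f + g, fun x y => by
      simp only [Submodule.coe_add, Pi.add_apply, hf x y, hg x y]; ring⟩
  zero_mem' := ⟨0, fun x y => by simp⟩
  smul_mem' := by
    rintro a c ⟨f, hf⟩
    exact ⟨a • f, fun x y => by
      simp only [SetLike.val_smul, Pi.smul_apply, smul_eq_mul, hf x y]; ring⟩

/-- `H²(G; k)` with trivial coefficients: 2-cocycles modulo 2-coboundaries. -/
def H2 : Type _ := twoCocycles k G ⧸ twoCoboundariesIn k G

noncomputable instance : AddCommGroup (H2 k G) := by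
  unfold H2; infer_instance

noncomputable instance : Module k (H2 k G) := by
  unfold H2; infer_instance

variable {k G} in
/-- The 2-cocycle `(x, y) ↦ f x * g y` given by two 1-cocycles. -/
def cupCocycle (f g : H1 k G) : twoCocycles k G :=
  ⟨fun x y => f.1 x * g.1 y, by
    intro x y z
    have hf := f.2 x y
    have hg := g.2 y z
    simp only [Set.mem_setOf_eq] at hf hg ⊢
    linear_combination (f.1 x : k) * hg - (g.1 z : k) * hf⟩

/-- The cup product `H¹(G;k) × H¹(G;k) → H²(G;k)` as a `k`-bilinear map. -/
noncomputable def cup : H1 k G →ₗ[k] H1 k G →ₗ[k] H2 k G :=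
  LinearMap.mk₂ k (fun f g => Submodule.Quotient.mk (cupCocycle f g))
    (by
      intro f f' g
      have h : cupCocycle (f + f') g = cupCocycle f g + cupCocycle f' g := by
        apply Subtype.ext; funext x y; simp [cupCocycle]; ring
      show Submodule.Quotient.mk (cupCocycle (f + f') g) = _
      rw [h, Submodule.Quotient.mk_add]; rfl)
    (by
      intro a f g
      have h : cupCocycle (a • f) g = a • cupCocycle f g := by
        apply Subtype.ext; funext x y; simp [cupCocycle]; ring
      show Submodule.Quotient.mk (cupCocycle (a • f) g) = _
      rw [h, Submodule.Quotient.mk_smul]; rfl)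
    (by
      intro f g g'
      have h : cupCocycle f (g + g') = cupCocycle f g + cupCocycle f g' := by
        apply Subtype.ext; funext x y; simp [cupCocycle]; ring
      show Submodule.Quotient.mk (cupCocycle f (g + g')) = _
      rw [h, Submodule.Quotient.mk_add]; rfl)
    (by
      intro a f g
      have h : cupCocycle f (a • g) = a • cupCocycle f g := by
        apply Subtype.ext; funext x y; simp [cupCocycle]; ring
      show Submodule.Quotient.mk (cupCocycle f (a • g)) = _
      rw [h, Submodule.Quotient.mk_smul]; rfl)

variable {k G}

variable {G' : Type*} [Group G']

/-- The map on `H¹` induced by a group homomorphism. -/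
def H1map (φ : G →* G') : H1 k G' →ₗ[k] H1 k G where
  toFun f := ⟨f.1 ∘ φ, by intro x y; simp only [Function.comp_apply, map_mul]; exact f.2 _ _⟩
  map_add' f g := rfl
  map_smul' a f := rfl

/-- The pull-back of 2-cocycles along a group homomorphism. -/
def twoCocyclesMap (φ : G →* G') : twoCocycles k G' →ₗ[k] twoCocycles k G where
  toFun c := ⟨fun x y => c.1 (φ x) (φ y), by
    intro x y z
    have := c.2 (φ x) (φ y) (φ z)
    simp only [map_mul] at *
    exact this⟩
  map_add' c d := rfl
  map_smul' a c := rfl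

/-- The map on `H²` induced by a group homomorphism. -/
noncomputable def H2map (φ : G →* G') : H2 k G' →ₗ[k] H2 k G :=
  Submodule.mapQ (twoCoboundariesIn k G') (twoCoboundariesIn k G) (twoCocyclesMap φ)
    (by
      rintro c ⟨f, hf⟩
      exact ⟨f ∘ φ, fun x y => by
        simp only [Function.comp_apply, map_mul, twoCocyclesMap, LinearMap.coe_mk,
          AddHom.coe_mk]
        exact hf _ _⟩)

end GroupCohomologyLowDim
section DualClassesAndProjection

variable {V : Type*} [DecidableEq V] (Γ : SimpleGraph V) (k : Type*) [CommRing k]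

/-- The homomorphism `A(Γ) → k` (written multiplicatively) dual to a vertex `v`,
sending `v ↦ 1` and all other generators to `0`. -/
def RAAG.dualHom (v : V) : RAAG Γ →* Multiplicative k :=
  PresentedGroup.toGroup
    (f := fun w => Multiplicative.ofAdd (if w = v then (1 : k) else 0))
    (by
      rintro r ⟨a, b, hab, rfl⟩
      rw [map_commutatorElement]
      exact commutatorElement_eq_one_iff_commute.mpr (mul_comm _ _))

/-- The cohomology class `f_v ∈ H¹(A(Γ); k)` dual to the vertex `v`. -/
def RAAG.dual (v : V) : H1 k (RAAG Γ) :=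
  ⟨fun g => Multiplicative.toAdd (RAAG.dualHom Γ k v g), by
    intro x y
    simp [map_mul]⟩

/-- The canonical surjection `A(Γ) → C(Γ)`. -/
def raagToRacg : RAAG Γ →* RACG Γ :=
  PresentedGroup.toGroup (f := fun v => RACG.gen Γ v) (by
    intro r hr
    have h : FreeGroup.lift (fun v => RACG.gen Γ v) = PresentedGroup.mk (racgRels Γ) := by
      apply FreeGroup.ext_hom
      intro a
      simp only [FreeGroup.lift_apply_of]
      rfl
    rw [h]
    have hmem : r ∈ Subgroup.normalClosure (racgRels Γ) :=
      Subgroup.subset_normalClosure (Set.mem_union_left _ hr)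
    exact (QuotientGroup.eq_one_iff r).mpr hmem)

end DualClassesAndProjection

section HeisAux

/-- The rational Heisenberg group (carrier). -/
@[ext] structure Heis where
  a : ℚ
  b : ℚ
  t : ℚ

instance : Mul Heis := ⟨fun x y => ⟨x.a + y.a, x.b + y.b, x.t + y.t + x.a * y.b⟩⟩
instance : One Heis := ⟨⟨0, 0, 0⟩⟩
instance : Inv Heis := ⟨fun x => ⟨-x.a, -x.b, -x.t + x.a * x.b⟩⟩

@[simp] lemma Heis.mul_a (x y : Heis) : (x * y).a = x.a + y.a := rfl
@[simp] lemma Heis.mul_b (x y : Heis) : (x * y).b = x.b + y.b := rfl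
@[simp] lemma Heis.mul_t (x y : Heis) : (x * y).t = x.t + y.t + x.a * y.b := rfl
@[simp] lemma Heis.one_a : (1 : Heis).a = 0 := rfl
@[simp] lemma Heis.one_b : (1 : Heis).b = 0 := rfl
@[simp] lemma Heis.one_t : (1 : Heis).t = 0 := rfl
@[simp] lemma Heis.inv_a (x : Heis) : x⁻¹.a = -x.a := rfl
@[simp] lemma Heis.inv_b (x : Heis) : x⁻¹.b = -x.b := rfl
@[simp] lemma Heis.inv_t (x : Heis) : x⁻¹.t = -x.t + x.a * x.b := rfl

instance : Group Heis where
  mul_assoc x y z := by ext <;> simp <;> ring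
  one_mul x := by ext <;> simp
  mul_one x := by ext <;> simp
  inv_mul_cancel x := by ext <;> simp

/-- The images of the generators in the Heisenberg group. -/
def heisGen {V : Type} [DecidableEq V] (v w : V) (u : V) : Heis :=
  ⟨if u = v then 1 else 0, if u = w then 1 else 0, 0⟩

/-- The homomorphism `A(Γ) → Heis` lifting `(f_v, f_w)`, for non-adjacent `v, w`. -/
def heisHom {V : Type} [DecidableEq V] (Γ : SimpleGraph V) (v w : V)
    (hnadj : ¬ Γ.Adj v w) : RAAG Γ →* Heis :=
  PresentedGroup.toGroup (f := heisGen v w) (by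
    rintro r ⟨x, y, hxy, rfl⟩
    rw [map_commutatorElement]
    apply commutatorElement_eq_one_iff_commute.mpr
    simp only [FreeGroup.lift_apply_of]
    show heisGen v w x * heisGen v w y = heisGen v w y * heisGen v w x
    have h1 : (if x = v then (1:ℚ) else 0) * (if y = w then (1:ℚ) else 0) = 0 := by
      by_cases hx : x = v
      · by_cases hy : y = w
        · exact absurd (hx ▸ hy ▸ hxy) hnadj
        · simp [hy]
      · simp [hx]
    have h2 : (if y = v then (1:ℚ) else 0) * (if x = w then (1:ℚ) else 0) = 0 := by
      by_cases hy : y = v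
      · by_cases hx : x = w
        · exact absurd (hy ▸ hx ▸ hxy.symm) hnadj
        · simp [hx]
      · simp [hy]
    refine Heis.ext ?_ ?_ ?_
    · show (if x = v then (1:ℚ) else 0) + (if y = v then 1 else 0)
        = (if y = v then (1:ℚ) else 0) + (if x = v then 1 else 0)
      ring
    · show (if x = w then (1:ℚ) else 0) + (if y = w then 1 else 0)
        = (if y = w then (1:ℚ) else 0) + (if x = w then 1 else 0)
      ring
    · show (0:ℚ) + 0 + (if x = v then (1:ℚ) else 0) * (if y = w then 1 else 0)
        = (0:ℚ) + 0 + (if y = v then (1:ℚ) else 0) * (if x = w then 1 else 0)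
      rw [h1, h2])

lemma heisHom_gen {V : Type} [DecidableEq V] (Γ : SimpleGraph V) (v w : V)
    (hnadj : ¬ Γ.Adj v w) (u : V) :
    heisHom Γ v w hnadj (RAAG.gen Γ u) = heisGen v w u :=
  PresentedGroup.toGroup.of _

lemma dual_gen {V : Type} [DecidableEq V] (Γ : SimpleGraph V) (u x : V) :
    (RAAG.dual Γ ℚ u).1 (RAAG.gen Γ x) = if x = u then 1 else 0 := by
  show Multiplicative.toAdd ((RAAG.dualHom Γ ℚ u) (RAAG.gen Γ x)) = _
  have h : (RAAG.dualHom Γ ℚ u) (RAAG.gen Γ x)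
      = Multiplicative.ofAdd (if x = u then (1:ℚ) else 0) := PresentedGroup.toGroup.of _
  rw [h]; rfl

lemma heisHom_a {V : Type} [DecidableEq V] (Γ : SimpleGraph V) (v w : V)
    (hnadj : ¬ Γ.Adj v w) (g : RAAG Γ) :
    (heisHom Γ v w hnadj g).a = (RAAG.dual Γ ℚ v).1 g := by
  let ψ : RAAG Γ →* Multiplicative ℚ :=
    { toFun := fun g => Multiplicative.ofAdd (heisHom Γ v w hnadj g).a
      map_one' := by simp
      map_mul' := fun x y => by simp [← ofAdd_add] }
  have key : ψ g = RAAG.dualHom Γ ℚ v g := by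
    rw [RAAG.dualHom]
    exact PresentedGroup.toGroup.unique _ ψ (fun u => by
      show Multiplicative.ofAdd (heisHom Γ v w hnadj (RAAG.gen Γ u)).a = _
      rw [heisHom_gen]; rfl)
  show Multiplicative.toAdd (ψ g) = _
  rw [key]; rfl

lemma heisHom_b {V : Type} [DecidableEq V] (Γ : SimpleGraph V) (v w : V)
    (hnadj : ¬ Γ.Adj v w) (g : RAAG Γ) :
    (heisHom Γ v w hnadj g).b = (RAAG.dual Γ ℚ w).1 g := by
  let ψ : RAAG Γ →* Multiplicative ℚ :=
    { toFun := fun g => Multiplicative.ofAdd (heisHom Γ v w hnadj g).b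
      map_one' := by simp
      map_mul' := fun x y => by simp [← ofAdd_add] }
  have key : ψ g = RAAG.dualHom Γ ℚ w g := by
    rw [RAAG.dualHom]
    exact PresentedGroup.toGroup.unique _ ψ (fun u => by
      show Multiplicative.ofAdd (heisHom Γ v w hnadj (RAAG.gen Γ u)).b = _
      rw [heisHom_gen]; rfl)
  show Multiplicative.toAdd (ψ g) = _
  rw [key]; rfl

lemma gen_commute_of_adj {V : Type} [DecidableEq V] (Γ : SimpleGraph V) {v w : V}
    (hadj : Γ.Adj v w) :
    RAAG.gen Γ v * RAAG.gen Γ w = RAAG.gen Γ w * RAAG.gen Γ v := by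
  have hmem : (⁅FreeGroup.of v, FreeGroup.of w⁆ : FreeGroup V) ∈
      Subgroup.normalClosure (raagRels Γ) :=
    Subgroup.subset_normalClosure ⟨v, w, hadj, rfl⟩
  have h1 : PresentedGroup.mk (raagRels Γ) ⁅FreeGroup.of v, FreeGroup.of w⁆ = 1 :=
    (QuotientGroup.eq_one_iff _).mpr hmem
  rw [map_commutatorElement] at h1
  exact commutatorElement_eq_one_iff_commute.mp h1

end HeisAux

/-- For distinct vertices `v ≠ w` of a finite graph `Γ`, the cup product
`f_v ⌣ f_w ∈ H²(A(Γ); ℚ)` of the dual classes is nonzero iff `v` and `w` are adjacent. -/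
theorem cup_dual_ne_zero_iff_adj {V : Type} [Fintype V] [DecidableEq V]
    (Γ : SimpleGraph V) (v w : V) (hvw : v ≠ w) :
    cup ℚ (RAAG Γ) (RAAG.dual Γ ℚ v) (RAAG.dual Γ ℚ w) ≠ 0 ↔ Γ.Adj v w := by
  have hcup : cup ℚ (RAAG Γ) (RAAG.dual Γ ℚ v) (RAAG.dual Γ ℚ w)
      = Submodule.Quotient.mk (cupCocycle (RAAG.dual Γ ℚ v) (RAAG.dual Γ ℚ w)) := rfl
  constructor
  · intro hne
    by_contra hnadj
    apply hne
    rw [hcup]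
    refine (Submodule.Quotient.mk_eq_zero _).mpr ?_
    refine ⟨fun g => -(heisHom Γ v w hnadj g).t, fun x y => ?_⟩
    have hmul := congrArg Heis.t (map_mul (heisHom Γ v w hnadj) x y)
    simp only [Heis.mul_t] at hmul
    show (RAAG.dual Γ ℚ v).1 x * (RAAG.dual Γ ℚ w).1 y = _
    rw [← heisHom_a Γ v w hnadj x, ← heisHom_b Γ v w hnadj y]
    linear_combination -hmul
  · intro hadj hzero
    rw [hcup] at hzero
    replace hzero := (Submodule.Quotient.mk_eq_zero _).mp hzero
    obtain ⟨F, hF⟩ := hzero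
    have h1 : (RAAG.dual Γ ℚ v).1 (RAAG.gen Γ v) * (RAAG.dual Γ ℚ w).1 (RAAG.gen Γ w) =
        F (RAAG.gen Γ v) - F (RAAG.gen Γ v * RAAG.gen Γ w) + F (RAAG.gen Γ w) := hF _ _
    have h2 : (RAAG.dual Γ ℚ v).1 (RAAG.gen Γ w) * (RAAG.dual Γ ℚ w).1 (RAAG.gen Γ v) =
        F (RAAG.gen Γ w) - F (RAAG.gen Γ w * RAAG.gen Γ v) + F (RAAG.gen Γ v) := hF _ _
    rw [dual_gen Γ v v, dual_gen Γ w w] at h1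
    rw [dual_gen Γ v w, dual_gen Γ w v] at h2
    rw [gen_commute_of_adj Γ hadj] at h1
    simp [hvw, Ne.symm hvw] at h1 h2
    linarith
end

section
/- For a finite simplicial graph Γ, H^2(C(Γ); Z/2) ≅ H^2(A(Γ); Z/2) ⊕ (Z/2)^{|V(Γ)|}, where the second summand Σ is precisely the image of the squaring map a ↦ a ⌣ a on H^1(C(Γ); Z/2), and the projection onto the first summand is induced by the natural surjection A(Γ) → C(Γ). -/
open scoped commutatorElement

section Mach
namespace RRX

lemma zneg (x : ZMod 2) : -x = x := by revert x; decide
lemma zms (x : ZMod 2) : x * x = x := by revert x; decide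
lemma ztwo (x : ZMod 2) : x + x = 0 := by revert x; decide

variable {V : Type*} {G : Type*} [Group G]

lemma coc_one_left {c : G → G → ZMod 2} (hc : IsTwoCocycle c) (x : G) : c x 1 = c 1 1 := by
  have h := hc x 1 1
  rw [mul_one, mul_one] at h
  linear_combination -h

lemma coc_one_right {c : G → G → ZMod 2} (hc : IsTwoCocycle c) (y : G) : c 1 y = c 1 1 := by
  have h := hc 1 1 y
  rw [one_mul, one_mul] at h
  linear_combination h

/-- underlying type of the central extension of the free group by a normalized 2-cocycle -/
structure ExtG (c : FreeGroup V → FreeGroup V → ZMod 2) where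
  a : ZMod 2
  w : FreeGroup V

instance {c : FreeGroup V → FreeGroup V → ZMod 2} : Mul (ExtG c) :=
  ⟨fun p q => ⟨p.a + q.a + c p.w q.w, p.w * q.w⟩⟩
instance {c : FreeGroup V → FreeGroup V → ZMod 2} : One (ExtG c) := ⟨⟨0, 1⟩⟩
instance {c : FreeGroup V → FreeGroup V → ZMod 2} : Inv (ExtG c) :=
  ⟨fun p => ⟨-p.a - c p.w p.w⁻¹, p.w⁻¹⟩⟩

lemma extg_mul {c : FreeGroup V → FreeGroup V → ZMod 2} (p q : ExtG c) :
    p * q = ⟨p.a + q.a + c p.w q.w, p.w * q.w⟩ := rfl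

lemma extg_one {c : FreeGroup V → FreeGroup V → ZMod 2} : (1 : ExtG c) = ⟨0, 1⟩ := rfl

lemma extg_inv {c : FreeGroup V → FreeGroup V → ZMod 2} (p : ExtG c) :
    p⁻¹ = ⟨-p.a - c p.w p.w⁻¹, p.w⁻¹⟩ := rfl

/-- Every 2-cocycle on a free group (with normalization) is a coboundary. -/
lemma free_cobound_norm (c : FreeGroup V → FreeGroup V → ZMod 2) (hc : IsTwoCocycle c)
    (hn : c 1 1 = 0) : ∃ f : FreeGroup V → ZMod 2, ∀ x y, c x y = f x - f (x * y) + f y := by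
  have h1y : ∀ y, c 1 y = 0 := fun y => (coc_one_right hc y).trans hn
  have hx1 : ∀ x, c x 1 = 0 := fun x => (coc_one_left hc x).trans hn
  have hinvswap : ∀ x : FreeGroup V, c x⁻¹ x = c x x⁻¹ := by
    intro x
    have h := hc x x⁻¹ x
    rw [mul_inv_cancel, inv_mul_cancel, h1y, hx1] at h
    linear_combination h
  letI : Group (ExtG c) := by
    refine Group.ofLeftAxioms ?_ ?_ ?_
    · rintro ⟨a, x⟩ ⟨b, y⟩ ⟨d, z⟩
      simp only [extg_mul, ExtG.mk.injEq]
      exact ⟨by linear_combination -hc x y z, mul_assoc x y z⟩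
    · rintro ⟨a, x⟩
      rw [extg_one, extg_mul]
      simp [h1y]
    · rintro ⟨a, x⟩
      rw [extg_inv, extg_mul, extg_one]
      simp only [ExtG.mk.injEq]
      constructor
      · rw [hinvswap]; ring
      · exact inv_mul_cancel x
  let proj : ExtG c →* FreeGroup V := MonoidHom.mk' (fun p => p.w) (fun p q => rfl)
  let s : FreeGroup V →* ExtG c := FreeGroup.lift (fun v => ⟨0, FreeGroup.of v⟩)
  have hw : ∀ x, (s x).w = x := by
    have h : proj.comp s = MonoidHom.id _ := by
      apply FreeGroup.ext_hom
      intro v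
      simp only [MonoidHom.comp_apply, MonoidHom.id_apply, s, FreeGroup.lift_apply_of]
      rfl
    intro x
    have := DFunLike.congr_fun h x
    exact this
  refine ⟨fun x => -(s x).a, fun x y => ?_⟩
  have hm := s.map_mul x y
  have ha := congrArg ExtG.a hm
  rw [extg_mul] at ha
  simp only [hw] at ha
  linear_combination -ha

/-- Every 2-cocycle on a free group is a coboundary. -/
lemma free_cobound (c : FreeGroup V → FreeGroup V → ZMod 2) (hc : IsTwoCocycle c) :
    ∃ f : FreeGroup V → ZMod 2, ∀ x y, c x y = f x - f (x * y) + f y := by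
  obtain ⟨f', hf'⟩ := free_cobound_norm (fun x y => c x y - c 1 1)
    (by intro x y z; have := hc x y z; simp only []; linear_combination this)
    (by simp)
  refine ⟨fun x => f' x + c 1 1, fun x y => ?_⟩
  have h := hf' x y
  linear_combination h

end RRX
end Mach
section Mach2
namespace RRX
variable {V : Type*} {G : Type*} [Group G]

lemma add_one (h : FreeGroup V → ZMod 2) (hh : ∀ x y, h (x * y) = h x + h y) : h 1 = 0 := by
  have h1 := hh 1 1
  rw [one_mul] at h1
  linear_combination -h1

lemma add_inv (h : FreeGroup V → ZMod 2) (hh : ∀ x y, h (x * y) = h x + h y) (x : FreeGroup V) :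
    h x⁻¹ = h x := by
  have h1 := hh x x⁻¹
  rw [mul_inv_cancel, add_one h hh] at h1
  linear_combination -h1 + zneg (h x)

/-- Additive maps to `ZMod 2` kill commutators and squares, hence the normal closure of any
set of such elements. -/
lemma hom_vanish (h : FreeGroup V → ZMod 2) (hh : ∀ x y, h (x * y) = h x + h y)
    (S : Set (FreeGroup V))
    (hS : ∀ r ∈ S, (∃ a b : FreeGroup V, r = ⁅a, b⁆) ∨ ∃ a : FreeGroup V, r = a ^ 2) :
    ∀ n ∈ Subgroup.normalClosure S, h n = 0 := by
  have h1 : h 1 = 0 := add_one h hh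
  have hinv := add_inv h hh
  let K : Subgroup (FreeGroup V) :=
    { carrier := {x | h x = 0}
      mul_mem' := by
        intro a b ha hb
        show h (a * b) = 0
        rw [hh, ha, hb, add_zero]
      one_mem' := h1
      inv_mem' := by
        intro a ha
        show h a⁻¹ = 0
        rw [hinv]; exact ha }
  haveI : K.Normal := by
    constructor
    intro n hn g
    show h (g * n * g⁻¹) = 0
    rw [hh, hh, hinv, hn, add_zero, ztwo]
  have hsub : S ⊆ ↑K := by
    intro r hr
    rcases hS r hr with ⟨a, b, rfl⟩ | ⟨a, rfl⟩
    · show h ⁅a, b⁆ = 0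
      rw [commutatorElement_def, hh, hh, hh, hinv, hinv]
      linear_combination ztwo (h a) + ztwo (h b)
    · show h (a ^ 2) = 0
      rw [pow_two, hh, ztwo]
  exact fun n hn => Subgroup.normalClosure_le_normal hsub hn

end RRX
end Mach2
section Mach3
namespace RRX
variable {V : Type*} {G : Type*} [Group G]
variable {p : FreeGroup V →* G} {c : G → G → ZMod 2} {f : FreeGroup V → ZMod 2}

section ML
variable (hc : IsTwoCocycle c) (hf : ∀ x y, c (p x) (p y) = f x - f (x * y) + f y)
include hc hf

lemma ML1 : f 1 = c 1 1 := by
  have h := hf 1 1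
  rw [one_mul, map_one] at h
  linear_combination -h

lemma ML2 (x n : FreeGroup V) (hn : p n = 1) : f (x * n) = f x + f n - c 1 1 := by
  have h := hf x n
  rw [hn, coc_one_left hc] at h
  linear_combination h

lemma ML4 (n : FreeGroup V) (hn : p n = 1) : f n⁻¹ - c 1 1 = -(f n - c 1 1) := by
  have h := ML2 hc hf n n⁻¹ (by rw [map_inv, hn, inv_one])
  rw [mul_inv_cancel, ML1 hc hf] at h
  linear_combination -h

lemma ML5 (x n : FreeGroup V) (hn : p n = 1) : f (x * n * x⁻¹) = f n := by
  have h1 := hf (x * n) x⁻¹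
  rw [map_mul, hn, mul_one, map_inv] at h1
  have h2 := hf x x⁻¹
  rw [mul_inv_cancel, map_inv, ML1 hc hf] at h2
  have h3 := ML2 hc hf x n hn
  linear_combination h1 - h2 + h3

end ML

/-- agreement of the "relator value" functions of two cocycles on all of the normal closure -/
lemma M2 {c' : G → G → ZMod 2} {f' : FreeGroup V → ZMod 2}
    (hc : IsTwoCocycle c) (hf : ∀ x y, c (p x) (p y) = f x - f (x * y) + f y)
    (hc' : IsTwoCocycle c') (hf' : ∀ x y, c' (p x) (p y) = f' x - f' (x * y) + f' y)
    (S : Set (FreeGroup V)) (hker : ∀ n ∈ Subgroup.normalClosure S, p n = 1)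
    (hS : ∀ r ∈ S, f r - c 1 1 = f' r - c' 1 1) :
    ∀ n ∈ Subgroup.normalClosure S, f n - c 1 1 = f' n - c' 1 1 := by
  let K : Subgroup (FreeGroup V) :=
    { carrier := {x | x ∈ Subgroup.normalClosure S ∧ f x - c 1 1 = f' x - c' 1 1}
      mul_mem' := by
        rintro a b ⟨haN, ha⟩ ⟨hbN, hb⟩
        refine ⟨mul_mem haN hbN, ?_⟩
        rw [ML2 hc hf a b (hker b hbN), ML2 hc' hf' a b (hker b hbN)]
        linear_combination ha + hb
      one_mem' := ⟨one_mem _, by rw [ML1 hc hf, ML1 hc' hf']; ring⟩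
      inv_mem' := by
        rintro a ⟨haN, ha⟩
        refine ⟨inv_mem haN, ?_⟩
        rw [ML4 hc hf a (hker a haN), ML4 hc' hf' a (hker a haN)]
        linear_combination -ha }
  haveI : K.Normal := by
    constructor
    rintro n ⟨hnN, hn⟩ g
    refine ⟨Subgroup.normalClosure_normal.conj_mem n hnN g, ?_⟩
    rw [ML5 hc hf g n (hker n hnN), ML5 hc' hf' g n (hker n hnN)]
    exact hn
  have hsub : S ⊆ ↑K := fun r hr => ⟨Subgroup.subset_normalClosure hr, hS r hr⟩
  exact fun n hn => (Subgroup.normalClosure_le_normal hsub hn).2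

/-- if the relator values vanish, the cocycle is a coboundary -/
lemma M1a (hsurj : Function.Surjective p)
    (hc : IsTwoCocycle c) (hf : ∀ x y, c (p x) (p y) = f x - f (x * y) + f y)
    (hvals : ∀ x, p x = 1 → f x = c 1 1) : IsTwoCoboundary c := by
  have key : ∀ x y : FreeGroup V, p x = p y → f x = f y := by
    intro x y hxy
    have h1 : p (x⁻¹ * y) = 1 := by rw [map_mul, map_inv, hxy, inv_mul_cancel]
    have h2 : y = x * (x⁻¹ * y) := by group
    rw [h2, ML2 hc hf x (x⁻¹ * y) h1, hvals _ h1]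
    ring
  choose sec hsec using hsurj
  refine ⟨fun u => f (sec u), fun u v => ?_⟩
  have e3 : f (sec (u * v)) = f (sec u * sec v) := key _ _ (by rw [hsec, map_mul, hsec, hsec])
  calc c u v = c (p (sec u)) (p (sec v)) := by rw [hsec, hsec]
    _ = f (sec u) - f (sec u * sec v) + f (sec v) := hf _ _
    _ = f (sec u) - f (sec (u * v)) + f (sec v) := by rw [e3]

/-- if the cocycle is a (pulled-back) coboundary, the relator values vanish -/
lemma M1b (hc : IsTwoCocycle c) (hf : ∀ x y, c (p x) (p y) = f x - f (x * y) + f y)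
    (S : Set (FreeGroup V))
    (hS : ∀ r ∈ S, (∃ a b : FreeGroup V, r = ⁅a, b⁆) ∨ ∃ a : FreeGroup V, r = a ^ 2)
    (hker : ∀ n, p n = 1 → n ∈ Subgroup.normalClosure S)
    (hcob : IsTwoCoboundary c) :
    ∀ n, p n = 1 → f n = c 1 1 := by
  obtain ⟨g, hg⟩ := hcob
  have hg1 : g 1 = c 1 1 := by have := hg 1 1; rw [one_mul] at this; linear_combination -this
  set h : FreeGroup V → ZMod 2 := fun x => f x - g (p x) with hh
  have hadd : ∀ x y, h (x * y) = h x + h y := by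
    intro x y
    have h1 := hf x y
    have h2 := hg (p x) (p y)
    simp only [hh, map_mul]
    linear_combination h1 - h2
  intro n hn
  have hvan := hom_vanish h hadd S hS n (hker n hn)
  simp only [hh, hn, hg1] at hvan
  linear_combination hvan

end RRX
end Mach3
section Mach4
namespace RRX
variable {V : Type*}

/-- values of a primitive `f` for a sum-of-products cocycle on commutators and squares -/
lemma f_values {ι : Type*} (s : Finset ι) (A B : ι → FreeGroup V → ZMod 2)
    (hA : ∀ i x y, A i (x * y) = A i x + A i y) (hB : ∀ i x y, B i (x * y) = B i x + B i y)
    (f : FreeGroup V → ZMod 2)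
    (hf : ∀ x y, (∑ i ∈ s, A i x * B i y) = f x - f (x * y) + f y) :
    f 1 = 0 ∧
    (∀ x y : FreeGroup V, f ⁅x, y⁆ = ∑ i ∈ s, (A i y * B i x - A i x * B i y)) ∧
    (∀ x : FreeGroup V, f (x * x) = 2 * f x - ∑ i ∈ s, A i x * B i x) := by
  have hA1 : ∀ i, A i 1 = 0 := by
    intro i; have := hA i 1 1; rw [one_mul] at this; linear_combination -this
  have hB1 : ∀ i, B i 1 = 0 := by
    intro i; have := hB i 1 1; rw [one_mul] at this; linear_combination -this
  have hAinv : ∀ i x, A i x⁻¹ = -A i x := by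
    intro i x; have := hA i x x⁻¹; rw [mul_inv_cancel, hA1] at this; linear_combination -this
  have hBinv : ∀ i x, B i x⁻¹ = -B i x := by
    intro i x; have := hB i x x⁻¹; rw [mul_inv_cancel, hB1] at this; linear_combination -this
  have hf1 : f 1 = 0 := by
    have h := hf 1 1
    rw [one_mul] at h
    have hz : (∑ i ∈ s, A i 1 * B i 1) = 0 :=
      Finset.sum_eq_zero (fun i _ => by rw [hA1, zero_mul])
    rw [hz] at h
    linear_combination -h
  have hmul : ∀ x y, f (x * y) = f x + f y - ∑ i ∈ s, A i x * B i y := by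
    intro x y; linear_combination hf x y
  have hfinv : ∀ x, f x⁻¹ = -f x - ∑ i ∈ s, A i x * B i x := by
    intro x
    have h := hmul x x⁻¹
    rw [mul_inv_cancel, hf1] at h
    have hz : (∑ i ∈ s, A i x * B i x⁻¹) = -∑ i ∈ s, A i x * B i x := by
      rw [← Finset.sum_neg_distrib]
      exact Finset.sum_congr rfl (fun i _ => by rw [hBinv]; ring)
    rw [hz] at h
    linear_combination -h
  refine ⟨hf1, fun x y => ?_, fun x => ?_⟩
  · have e2 : f (x * y) = f x + f y - ∑ i ∈ s, A i x * B i y := hmul x y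
    have e3 : f (x * y * x⁻¹) = f (x * y) + f x⁻¹ - ∑ i ∈ s, A i (x * y) * B i x⁻¹ := hmul _ _
    have e3' : (∑ i ∈ s, A i (x * y) * B i x⁻¹)
        = -(∑ i ∈ s, A i x * B i x) - ∑ i ∈ s, A i y * B i x := by
      have : ∀ i ∈ s, A i (x * y) * B i x⁻¹ = -(A i x * B i x) - A i y * B i x := by
        intro i _
        rw [hA, hBinv]
        ring
      rw [Finset.sum_congr rfl this, Finset.sum_sub_distrib, Finset.sum_neg_distrib]
    have e4 : f (x * y * x⁻¹ * y⁻¹)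
        = f (x * y * x⁻¹) + f y⁻¹ - ∑ i ∈ s, A i (x * y * x⁻¹) * B i y⁻¹ := hmul _ _
    have e4' : (∑ i ∈ s, A i (x * y * x⁻¹) * B i y⁻¹) = -∑ i ∈ s, A i y * B i y := by
      have : ∀ i ∈ s, A i (x * y * x⁻¹) * B i y⁻¹ = -(A i y * B i y) := by
        intro i _
        rw [hA, hA, hAinv, hBinv]
        ring
      rw [Finset.sum_congr rfl this, Finset.sum_neg_distrib]
    have e5 : (∑ i ∈ s, (A i y * B i x - A i x * B i y))
        = (∑ i ∈ s, A i y * B i x) - ∑ i ∈ s, A i x * B i y := Finset.sum_sub_distrib _ _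
    rw [commutatorElement_def, e4, e4', e3, e3', e2, hfinv x, hfinv y, e5]
    ring
  · have h := hmul x x
    rw [h]
    ring
end RRX
end Mach4
section Mach5
namespace RRX
variable {V : Type*} [DecidableEq V] (Γ : SimpleGraph V)

/-- The homomorphism `C(Γ) → ZMod 2` dual to a vertex `v`. -/
def racgDualHom (v : V) : RACG Γ →* Multiplicative (ZMod 2) :=
  PresentedGroup.toGroup
    (f := fun w => Multiplicative.ofAdd (if w = v then (1 : ZMod 2) else 0))
    (by
      rintro r (⟨a, b, hab, rfl⟩ | ⟨a, rfl⟩)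
      · rw [map_commutatorElement]
        exact commutatorElement_eq_one_iff_commute.mpr (mul_comm _ _)
      · rw [map_pow]
        refine Multiplicative.toAdd.injective ?_
        rw [pow_two, toAdd_mul, toAdd_one]
        exact ztwo _)

/-- The class in `H¹(C(Γ); ZMod 2)` dual to the vertex `v`. -/
def racgDual (v : V) : H1 (ZMod 2) (RACG Γ) :=
  ⟨fun g => (racgDualHom Γ v g).toAdd, by intro x y; simp [map_mul]⟩

lemma racgDual_of (v w : V) :
    (racgDual Γ v).1 (PresentedGroup.mk (racgRels Γ) (FreeGroup.of w))
      = if w = v then 1 else 0 := by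
  show (racgDualHom Γ v (PresentedGroup.of w)).toAdd = _
  have h : racgDualHom Γ v (PresentedGroup.of w)
      = Multiplicative.ofAdd (if w = v then (1 : ZMod 2) else 0) :=
    PresentedGroup.toGroup.of _
  rw [h]
  rfl

lemma racgDual_add (v : V) (x y : FreeGroup V) :
    (racgDual Γ v).1 (PresentedGroup.mk (racgRels Γ) (x * y))
      = (racgDual Γ v).1 (PresentedGroup.mk (racgRels Γ) x)
        + (racgDual Γ v).1 (PresentedGroup.mk (racgRels Γ) y) := by
  rw [map_mul]
  exact (racgDual Γ v).2 _ _

lemma pi_comm (x : FreeGroup V) :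
    raagToRacg Γ (PresentedGroup.mk (raagRels Γ) x) = PresentedGroup.mk (racgRels Γ) x := by
  have h : (raagToRacg Γ).comp (PresentedGroup.mk (raagRels Γ))
      = PresentedGroup.mk (racgRels Γ) := by
    apply FreeGroup.ext_hom
    intro v
    show raagToRacg Γ (PresentedGroup.of v) = PresentedGroup.of v
    exact PresentedGroup.toGroup.of _
  exact DFunLike.congr_fun h x

lemma raag_shape : ∀ r ∈ raagRels Γ,
    (∃ a b : FreeGroup V, r = ⁅a, b⁆) ∨ ∃ a : FreeGroup V, r = a ^ 2 := by
  rintro r ⟨a, b, hab, rfl⟩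
  exact Or.inl ⟨_, _, rfl⟩

lemma racg_shape : ∀ r ∈ racgRels Γ,
    (∃ a b : FreeGroup V, r = ⁅a, b⁆) ∨ ∃ a : FreeGroup V, r = a ^ 2 := by
  rintro r (⟨a, b, hab, rfl⟩ | ⟨a, rfl⟩)
  · exact Or.inl ⟨_, _, rfl⟩
  · exact Or.inr ⟨_, rfl⟩

lemma pullback_cocycle {G H : Type*} [Group G] [Group H] (φ : G →* H)
    {c : H → H → ZMod 2} (hc : IsTwoCocycle c) :
    IsTwoCocycle (fun x y => c (φ x) (φ y)) := by
  intro x y z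
  simp only [map_mul]
  exact hc _ _ _

/-- two 2-cocycles on a presented group whose relator values agree give equal classes -/
lemma key_eq {rels : Set (FreeGroup V)}
    (c c' : twoCocycles (ZMod 2) (PresentedGroup rels))
    (f f' : FreeGroup V → ZMod 2)
    (hf : ∀ x y, (c : PresentedGroup rels → PresentedGroup rels → ZMod 2)
      (PresentedGroup.mk rels x) (PresentedGroup.mk rels y) = f x - f (x * y) + f y)
    (hf' : ∀ x y, (c' : PresentedGroup rels → PresentedGroup rels → ZMod 2)
      (PresentedGroup.mk rels x) (PresentedGroup.mk rels y) = f' x - f' (x * y) + f' y)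
    (hvals : ∀ r ∈ rels, f r - (c : PresentedGroup rels → PresentedGroup rels → ZMod 2) 1 1
      = f' r - (c' : PresentedGroup rels → PresentedGroup rels → ZMod 2) 1 1) :
    (Submodule.Quotient.mk c : H2 (ZMod 2) (PresentedGroup rels))
      = Submodule.Quotient.mk c' := by
  rw [Submodule.Quotient.eq]
  show IsTwoCoboundary ((c - c' : twoCocycles (ZMod 2) (PresentedGroup rels))
    : PresentedGroup rels → PresentedGroup rels → ZMod 2)
  have hdiff : ∀ x y, ((c - c' : twoCocycles (ZMod 2) (PresentedGroup rels))
      : PresentedGroup rels → PresentedGroup rels → ZMod 2)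
      (PresentedGroup.mk rels x) (PresentedGroup.mk rels y)
      = (fun t => f t - f' t) x - (fun t => f t - f' t) (x * y) + (fun t => f t - f' t) y := by
    intro x y
    have h1 := hf x y
    have h2 := hf' x y
    simp only [Submodule.coe_sub, Pi.sub_apply]
    linear_combination h1 - h2
  refine M1a (PresentedGroup.mk_surjective rels) (c - c').2 hdiff ?_
  intro x hx
  have hxN : x ∈ Subgroup.normalClosure rels := (QuotientGroup.eq_one_iff x).mp hx
  have hM2 := M2 (hc := c.2) (hf := hf) (hc' := c'.2) (hf' := hf') rels
    (fun n hn => (QuotientGroup.eq_one_iff n).mpr hn) hvals x hxN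
  simp only [Submodule.coe_sub, Pi.sub_apply]
  linear_combination hM2

/-- if a cocycle class vanishes, its relator values vanish -/
lemma key_extract {rels : Set (FreeGroup V)}
    (hshape : ∀ r ∈ rels, (∃ a b : FreeGroup V, r = ⁅a, b⁆) ∨ ∃ a : FreeGroup V, r = a ^ 2)
    (c : PresentedGroup rels → PresentedGroup rels → ZMod 2) (hc : IsTwoCocycle c)
    (f : FreeGroup V → ZMod 2)
    (hf : ∀ x y, c (PresentedGroup.mk rels x) (PresentedGroup.mk rels y)
      = f x - f (x * y) + f y)
    (hcob : IsTwoCoboundary c) :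
    ∀ n ∈ Subgroup.normalClosure rels, f n = c 1 1 :=
  fun n hn => M1b hc hf rels hshape
    (fun m hm => (QuotientGroup.eq_one_iff m).mp hm) hcob n
    ((QuotientGroup.eq_one_iff n).mpr hn)

end RRX
end Mach5
section Mach6
namespace RRX
variable {V : Type*} [DecidableEq V] (Γ : SimpleGraph V)

lemma H1_one {k : Type*} [CommRing k] {G : Type*} [Group G] (a : H1 k G) : a.1 1 = 0 := by
  have := a.2 1 1
  rw [one_mul] at this
  linear_combination -this

/-- a finite sum of cup products of dual classes, as a 2-cocycle on `C(Γ)` -/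
def cupSum {ι : Type*} (s : Finset ι) (a b : ι → V) (e : ι → ZMod 2) :
    twoCocycles (ZMod 2) (RACG Γ) :=
  ∑ i ∈ s, e i • cupCocycle (racgDual Γ (a i)) (racgDual Γ (b i))

lemma cupSum_apply {ι : Type*} (s : Finset ι) (a b : ι → V) (e : ι → ZMod 2)
    (u w : RACG Γ) :
    (cupSum Γ s a b e : RACG Γ → RACG Γ → ZMod 2) u w
      = ∑ i ∈ s, e i * ((racgDual Γ (a i)).1 u * (racgDual Γ (b i)).1 w) := by
  rw [cupSum, Submodule.coe_sum, Finset.sum_apply, Finset.sum_apply]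
  refine Finset.sum_congr rfl (fun i _ => ?_)
  rfl

/-- the Kronecker delta on vertices -/
def dv (x w : V) : ZMod 2 := if w = x then 1 else 0

lemma dF_of (v w : V) :
    (racgDual Γ v).1 (PresentedGroup.mk (racgRels Γ) (FreeGroup.of w)) = dv v w :=
  racgDual_of Γ v w

/-- evaluation of a double-delta sum -/
lemma sum_dd (P : Finset (V × V)) (g : V × V → ZMod 2) (u w : V) :
    (∑ p ∈ P, g p * (dv p.1 u * dv p.2 w)) = if (u, w) ∈ P then g (u, w) else 0 := by
  rw [Finset.sum_congr rfl (g := fun p => if (u, w) = p then g p else 0) ?_,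
    Finset.sum_ite_eq]
  intro p _
  rw [dv, dv]
  by_cases h1 : u = p.1 <;> by_cases h2 : w = p.2 <;>
    simp [Prod.ext_iff, h1, h2]

/-- relator values for the classes `cupSum` -/
lemma cupSum_vals {ι : Type*} (s : Finset ι) (a b : ι → V) (e : ι → ZMod 2)
    (f : FreeGroup V → ZMod 2)
    (hf : ∀ x y, (cupSum Γ s a b e : RACG Γ → RACG Γ → ZMod 2)
      (PresentedGroup.mk (racgRels Γ) x) (PresentedGroup.mk (racgRels Γ) y)
      = f x - f (x * y) + f y) :
    (cupSum Γ s a b e : RACG Γ → RACG Γ → ZMod 2) 1 1 = 0 ∧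
    (∀ u w : V, f ⁅FreeGroup.of u, FreeGroup.of w⁆
      = ∑ i ∈ s, e i * (dv (a i) w * dv (b i) u - dv (a i) u * dv (b i) w)) ∧
    (∀ w : V, f (FreeGroup.of w ^ 2) = ∑ i ∈ s, e i * (dv (a i) w * dv (b i) w)) := by
  set A : ι → FreeGroup V → ZMod 2 :=
    fun i x => e i * (racgDual Γ (a i)).1 (PresentedGroup.mk (racgRels Γ) x) with hA'
  set B : ι → FreeGroup V → ZMod 2 :=
    fun i x => (racgDual Γ (b i)).1 (PresentedGroup.mk (racgRels Γ) x) with hB'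
  have hA : ∀ i x y, A i (x * y) = A i x + A i y := by
    intro i x y
    simp only [hA', racgDual_add]
    ring
  have hB : ∀ i x y, B i (x * y) = B i x + B i y := by
    intro i x y
    simp only [hB', racgDual_add]
  have hsum : ∀ x y, (∑ i ∈ s, A i x * B i y) = f x - f (x * y) + f y := by
    intro x y
    erw [← hf x y, cupSum_apply]
    exact Finset.sum_congr rfl (fun i _ => by simp only [hA', hB']; ring)
  obtain ⟨hf1, hcom, hsq⟩ := f_values s A B hA hB f hsum
  have hone : (cupSum Γ s a b e : RACG Γ → RACG Γ → ZMod 2) 1 1 = 0 := by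
    have h := hf 1 1
    rw [one_mul, hf1] at h
    rw [show ((1 : RACG Γ)) = PresentedGroup.mk (racgRels Γ) 1 by rw [map_one]; rfl]
    rw [h]
    ring
  refine ⟨hone, fun u w => ?_, fun w => ?_⟩
  · rw [hcom (FreeGroup.of u) (FreeGroup.of w)]
    refine Finset.sum_congr rfl (fun i _ => ?_)
    simp only [hA', hB', dF_of]
    ring
  · rw [pow_two, hsq (FreeGroup.of w)]
    have h2 : (2 : ZMod 2) = 0 := by decide
    rw [h2, zero_mul, zero_sub]
    rw [show (∑ i ∈ s, A i (FreeGroup.of w) * B i (FreeGroup.of w))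
        = ∑ i ∈ s, e i * (dv (a i) w * dv (b i) w) from
      Finset.sum_congr rfl (fun i _ => by simp only [hA', hB', dF_of]; ring)]
    exact zneg _

end RRX
end Mach6
section Mach7
namespace RRX
variable {V : Type*} [DecidableEq V] (Γ : SimpleGraph V)

lemma H1_inv {k : Type*} [CommRing k] {G : Type*} [Group G] (a : H1 k G) (g : G) :
    a.1 g⁻¹ = -a.1 g := by
  have h := a.2 g g⁻¹
  rw [mul_inv_cancel, H1_one] at h
  linear_combination -h

/-- every class in `H¹(C(Γ))` is a combination of vertex duals -/
lemma H1_expand [Fintype V] (a : H1 (ZMod 2) (RACG Γ)) (u : RACG Γ) :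
    a.1 u = ∑ v : V, a.1 (PresentedGroup.of v) * (racgDual Γ v).1 u := by
  obtain ⟨x, rfl⟩ := PresentedGroup.mk_surjective (racgRels Γ) u
  set F : FreeGroup V → ZMod 2 := fun x => a.1 (PresentedGroup.mk (racgRels Γ) x) with hF
  set G : FreeGroup V → ZMod 2 := fun x => ∑ v : V, a.1 (PresentedGroup.of v)
      * (racgDual Γ v).1 (PresentedGroup.mk (racgRels Γ) x) with hG
  show F x = G x
  have hFadd : ∀ x y, F (x * y) = F x + F y := by
    intro x y
    simp only [hF, map_mul]
    exact a.2 _ _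
  have hGadd : ∀ x y, G (x * y) = G x + G y := by
    intro x y
    simp only [hG, map_mul]
    rw [← Finset.sum_add_distrib]
    exact Finset.sum_congr rfl (fun v _ => by erw [(racgDual Γ v).2]; ring)
  have hF1 : F 1 = 0 := by have := hFadd 1 1; rw [one_mul] at this; linear_combination -this
  have hG1 : G 1 = 0 := by have := hGadd 1 1; rw [one_mul] at this; linear_combination -this
  have hFinv : ∀ x, F x⁻¹ = -F x := by
    intro x; have := hFadd x x⁻¹; rw [mul_inv_cancel, hF1] at this; linear_combination -this
  have hGinv : ∀ x, G x⁻¹ = -G x := by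
    intro x; have := hGadd x x⁻¹; rw [mul_inv_cancel, hG1] at this; linear_combination -this
  have hgen : ∀ w : V, F (FreeGroup.of w) = G (FreeGroup.of w) := by
    intro w
    have : ∀ v : V, a.1 (PresentedGroup.of v)
        * (racgDual Γ v).1 (PresentedGroup.mk (racgRels Γ) (FreeGroup.of w))
        = if w = v then a.1 (PresentedGroup.of v) else 0 := by
      intro v
      rw [dF_of, dv]
      by_cases h : w = v <;> simp [h]
    simp only [hG]
    rw [Finset.sum_congr rfl (fun v _ => this v), Finset.sum_ite_eq]
    simp only [Finset.mem_univ, if_true]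
    rfl
  induction x using FreeGroup.induction_on with
  | C1 => rw [hF1, hG1]
  | of w => exact hgen w
  | inv_of w hw =>
      rw [hFinv, hGinv, hgen w]
  | mul x y hx hy => rw [hFadd, hGadd, hx, hy]

/-- the cup square of any `H¹` class is an explicit `cupSum` -/
lemma cup_self_eq_cupSum [Fintype V] (a : H1 (ZMod 2) (RACG Γ)) :
    cupCocycle a a = cupSum Γ (Finset.univ ×ˢ Finset.univ) Prod.fst Prod.snd
      (fun p => a.1 (PresentedGroup.of p.1) * a.1 (PresentedGroup.of p.2)) := by
  apply Subtype.ext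
  funext u w
  show a.1 u * a.1 w = _
  rw [cupSum_apply, H1_expand Γ a u, H1_expand Γ a w, Finset.sum_mul_sum,
    ← Finset.sum_product']
  refine Finset.sum_congr rfl (fun p _ => ?_)
  ring

end RRX
end Mach7
section Mach8
namespace RRX
variable {V : Type*} [DecidableEq V] (Γ : SimpleGraph V)

/-- pullback to the free group along the RAAG presentation agrees with the RACG one -/
lemma pullA {c : twoCocycles (ZMod 2) (RACG Γ)} {f : FreeGroup V → ZMod 2}
    (hf : ∀ x y, (c : RACG Γ → RACG Γ → ZMod 2) (PresentedGroup.mk (racgRels Γ) x)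
      (PresentedGroup.mk (racgRels Γ) y) = f x - f (x * y) + f y) :
    ∀ x y, ((twoCocyclesMap (raagToRacg Γ) c : twoCocycles (ZMod 2) (RAAG Γ))
        : RAAG Γ → RAAG Γ → ZMod 2)
      (PresentedGroup.mk (raagRels Γ) x) (PresentedGroup.mk (raagRels Γ) y)
      = f x - f (x * y) + f y := by
  intro x y
  show (c : RACG Γ → RACG Γ → ZMod 2)
    (raagToRacg Γ (PresentedGroup.mk (raagRels Γ) x))
    (raagToRacg Γ (PresentedGroup.mk (raagRels Γ) y)) = _
  rw [pi_comm, pi_comm]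
  exact hf x y

lemma pullA_one (c : twoCocycles (ZMod 2) (RACG Γ)) :
    ((twoCocyclesMap (raagToRacg Γ) c : twoCocycles (ZMod 2) (RAAG Γ))
      : RAAG Γ → RAAG Γ → ZMod 2) 1 1 = (c : RACG Γ → RACG Γ → ZMod 2) 1 1 := by
  show (c : RACG Γ → RACG Γ → ZMod 2) (raagToRacg Γ 1) (raagToRacg Γ 1) = _
  rw [map_one]

/-- kernel membership criterion: the values on the RAAG relators vanish -/
lemma mem_ker_of_vals (c : twoCocycles (ZMod 2) (RACG Γ)) (f : FreeGroup V → ZMod 2)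
    (hf : ∀ x y, (c : RACG Γ → RACG Γ → ZMod 2) (PresentedGroup.mk (racgRels Γ) x)
      (PresentedGroup.mk (racgRels Γ) y) = f x - f (x * y) + f y)
    (hvals : ∀ r ∈ raagRels Γ, f r = (c : RACG Γ → RACG Γ → ZMod 2) 1 1) :
    H2map (k := ZMod 2) (raagToRacg Γ) (Submodule.Quotient.mk c) = 0 := by
  have hH : H2map (k := ZMod 2) (raagToRacg Γ) (Submodule.Quotient.mk c)
      = Submodule.Quotient.mk (twoCocyclesMap (raagToRacg Γ) c) := rfl
  rw [hH]
  have h := key_eq (rels := raagRels Γ) (twoCocyclesMap (raagToRacg Γ) c) 0 f (fun _ => 0)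
    (pullA Γ hf) (by intro x y; simp) ?_
  · erw [h, Submodule.Quotient.mk_zero]; rfl
  · intro r hr
    erw [pullA_one, hvals r hr]
    simp

/-- conversely, membership in the kernel makes the values on the RAAG relators vanish -/
lemma vals_of_mem_ker (c : twoCocycles (ZMod 2) (RACG Γ)) (f : FreeGroup V → ZMod 2)
    (hf : ∀ x y, (c : RACG Γ → RACG Γ → ZMod 2) (PresentedGroup.mk (racgRels Γ) x)
      (PresentedGroup.mk (racgRels Γ) y) = f x - f (x * y) + f y)
    (hker : H2map (k := ZMod 2) (raagToRacg Γ) (Submodule.Quotient.mk c) = 0) :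
    ∀ n ∈ Subgroup.normalClosure (raagRels Γ), f n = (c : RACG Γ → RACG Γ → ZMod 2) 1 1 := by
  have hH : H2map (k := ZMod 2) (raagToRacg Γ) (Submodule.Quotient.mk c)
      = Submodule.Quotient.mk (twoCocyclesMap (raagToRacg Γ) c) := rfl
  erw [hH, Submodule.Quotient.mk_eq_zero] at hker
  have hcob : IsTwoCoboundary ((twoCocyclesMap (raagToRacg Γ) c
      : twoCocycles (ZMod 2) (RAAG Γ)) : RAAG Γ → RAAG Γ → ZMod 2) := hker
  intro n hn
  have h := key_extract (raag_shape Γ) _ (twoCocyclesMap (raagToRacg Γ) c).2 f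
    (pullA Γ hf) hcob n hn
  erw [pullA_one] at h
  exact h

variable [Fintype V]

/-- diagonal double-delta sums -/
lemma sum_diag (ε : V → ZMod 2) (w : V) :
    (∑ v : V, ε v * (dv v w * dv v w)) = ε w := by
  rw [Finset.sum_congr rfl (g := fun v => if w = v then ε v else 0) (fun v _ => by
    rw [dv]; by_cases h : w = v <;> simp [h]), Finset.sum_ite_eq]
  simp

lemma sum_diag0 (ε : V → ZMod 2) (u w : V) :
    (∑ v : V, ε v * (dv v w * dv v u - dv v u * dv v w)) = 0 :=
  Finset.sum_eq_zero (fun v _ => by ring)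

/-- the square-class map as a linear map to `H²(C(Γ))` -/
noncomputable def sqMap : (V → ZMod 2) →ₗ[ZMod 2] H2 (ZMod 2) (RACG Γ) where
  toFun ε := Submodule.Quotient.mk (cupSum Γ Finset.univ id id ε)
  map_add' ε ε' := by
    have h : cupSum Γ Finset.univ id id (ε + ε')
        = cupSum Γ Finset.univ id id ε + cupSum Γ Finset.univ id id ε' := by
      unfold cupSum
      rw [← Finset.sum_add_distrib]
      exact Finset.sum_congr rfl fun v _ => by rw [Pi.add_apply, add_smul]
    rw [h, Submodule.Quotient.mk_add]; rfl
  map_smul' r ε := by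
    have h : cupSum Γ Finset.univ id id (r • ε) = r • cupSum Γ Finset.univ id id ε := by
      unfold cupSum
      rw [Finset.smul_sum]
      exact Finset.sum_congr rfl fun v _ => by rw [Pi.smul_apply, smul_smul, smul_eq_mul]
    rw [RingHom.id_apply, h, Submodule.Quotient.mk_smul]; rfl

/-- the square classes lie in the kernel -/
lemma sq_mem_ker (ε : V → ZMod 2) :
    H2map (k := ZMod 2) (raagToRacg Γ) (Submodule.Quotient.mk
      (cupSum Γ Finset.univ id id ε)) = 0 := by
  obtain ⟨f, hf⟩ := free_cobound
    (fun x y => (cupSum Γ Finset.univ id id ε : RACG Γ → RACG Γ → ZMod 2)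
      (PresentedGroup.mk (racgRels Γ) x) (PresentedGroup.mk (racgRels Γ) y))
    (pullback_cocycle _ (cupSum Γ Finset.univ id id ε).2)
  have hf' : ∀ x y, (cupSum Γ Finset.univ id id ε : RACG Γ → RACG Γ → ZMod 2)
      (PresentedGroup.mk (racgRels Γ) x) (PresentedGroup.mk (racgRels Γ) y)
      = f x - f (x * y) + f y := hf
  obtain ⟨hone, hcom, _⟩ := cupSum_vals Γ Finset.univ id id ε f hf'
  simp only [id_eq] at hcom
  refine mem_ker_of_vals Γ _ f hf' ?_
  rintro r ⟨v, w, hvw, rfl⟩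
  rw [hone, hcom v w]
  exact sum_diag0 ε v w

/-- the square classes are nonzero unless all coefficients vanish -/
lemma sq_inj (ε : V → ZMod 2)
    (h : (Submodule.Quotient.mk (cupSum Γ Finset.univ id id ε)
      : H2 (ZMod 2) (RACG Γ)) = 0) : ε = 0 := by
  rw [Submodule.Quotient.mk_eq_zero] at h
  have hcob : IsTwoCoboundary ((cupSum Γ Finset.univ id id ε
      : twoCocycles (ZMod 2) (RACG Γ)) : RACG Γ → RACG Γ → ZMod 2) := h
  obtain ⟨f, hf⟩ := free_cobound
    (fun x y => (cupSum Γ Finset.univ id id ε : RACG Γ → RACG Γ → ZMod 2)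
      (PresentedGroup.mk (racgRels Γ) x) (PresentedGroup.mk (racgRels Γ) y))
    (pullback_cocycle _ (cupSum Γ Finset.univ id id ε).2)
  have hf' : ∀ x y, (cupSum Γ Finset.univ id id ε : RACG Γ → RACG Γ → ZMod 2)
      (PresentedGroup.mk (racgRels Γ) x) (PresentedGroup.mk (racgRels Γ) y)
      = f x - f (x * y) + f y := hf
  obtain ⟨hone, _, hsq⟩ := cupSum_vals Γ Finset.univ id id ε f hf'
  simp only [id_eq] at hsq
  have hval := key_extract (racg_shape Γ) _ (cupSum Γ Finset.univ id id ε).2 f hf' hcob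
  funext w
  have hmem : (FreeGroup.of w ^ 2) ∈ Subgroup.normalClosure (racgRels Γ) :=
    Subgroup.subset_normalClosure (Or.inr ⟨w, rfl⟩)
  have h1 := hval _ hmem
  erw [hone, hsq w] at h1
  rw [sum_diag ε w] at h1
  exact h1

/-- a kernel element is the square class of its square relator values -/
lemma ker_rep (c : twoCocycles (ZMod 2) (RACG Γ)) (f : FreeGroup V → ZMod 2)
    (hf : ∀ x y, (c : RACG Γ → RACG Γ → ZMod 2) (PresentedGroup.mk (racgRels Γ) x)
      (PresentedGroup.mk (racgRels Γ) y) = f x - f (x * y) + f y)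
    (hker : H2map (k := ZMod 2) (raagToRacg Γ) (Submodule.Quotient.mk c) = 0) :
    (Submodule.Quotient.mk c : H2 (ZMod 2) (RACG Γ))
      = Submodule.Quotient.mk (cupSum Γ Finset.univ id id
          (fun v => f (FreeGroup.of v ^ 2) - (c : RACG Γ → RACG Γ → ZMod 2) 1 1)) := by
  set ε : V → ZMod 2 :=
    fun v => f (FreeGroup.of v ^ 2) - (c : RACG Γ → RACG Γ → ZMod 2) 1 1 with hε
  have hN := vals_of_mem_ker Γ c f hf hker
  obtain ⟨f', hf0⟩ := free_cobound
    (fun x y => (cupSum Γ Finset.univ id id ε : RACG Γ → RACG Γ → ZMod 2)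
      (PresentedGroup.mk (racgRels Γ) x) (PresentedGroup.mk (racgRels Γ) y))
    (pullback_cocycle _ (cupSum Γ Finset.univ id id ε).2)
  have hf0' : ∀ x y, (cupSum Γ Finset.univ id id ε : RACG Γ → RACG Γ → ZMod 2)
      (PresentedGroup.mk (racgRels Γ) x) (PresentedGroup.mk (racgRels Γ) y)
      = f' x - f' (x * y) + f' y := hf0
  obtain ⟨hone, hcom, hsq⟩ := cupSum_vals Γ Finset.univ id id ε f' hf0'
  simp only [id_eq] at hcom hsq
  refine key_eq c _ f f' hf hf0' ?_
  rintro r (⟨v, w, hvw, rfl⟩ | ⟨v, rfl⟩)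
  · erw [hone, hcom v w, sum_diag0 ε v w, sub_zero]
    have hr : ⁅FreeGroup.of v, FreeGroup.of w⁆ ∈ Subgroup.normalClosure (raagRels Γ) :=
      Subgroup.subset_normalClosure ⟨v, w, hvw, rfl⟩
    rw [hN _ hr]
    exact sub_self _
  · erw [hone, hsq v, sum_diag ε v, sub_zero]; rfl

end RRX
end Mach8
section Mach9
namespace RRX
variable {V : Type*} [DecidableEq V] (Γ : SimpleGraph V)

lemma sum_dd_split (P : Finset (V × V)) (g : V × V → ZMod 2) (u w u' w' : V) :
    (∑ p ∈ P, g p * (dv p.1 u * dv p.2 w - dv p.1 u' * dv p.2 w'))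
      = (∑ p ∈ P, g p * (dv p.1 u * dv p.2 w))
        - ∑ p ∈ P, g p * (dv p.1 u' * dv p.2 w') := by
  rw [← Finset.sum_sub_distrib]
  exact Finset.sum_congr rfl fun p _ => by ring

/-- the class of the cup square of `a` equals the square class of its generator values -/
lemma cup_self_class [Fintype V] (a : H1 (ZMod 2) (RACG Γ)) :
    (Submodule.Quotient.mk (cupCocycle a a) : H2 (ZMod 2) (RACG Γ))
      = Submodule.Quotient.mk (cupSum Γ Finset.univ id id
          (fun v => a.1 (PresentedGroup.of v))) := by
  set εa : V → ZMod 2 := fun v => a.1 (PresentedGroup.of v) with hεa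
  rw [cup_self_eq_cupSum Γ a]
  set g : V × V → ZMod 2 := fun p => εa p.1 * εa p.2 with hg
  obtain ⟨f1, hf1⟩ := free_cobound
    (fun x y => (cupSum Γ (Finset.univ ×ˢ Finset.univ) Prod.fst Prod.snd g
        : RACG Γ → RACG Γ → ZMod 2)
      (PresentedGroup.mk (racgRels Γ) x) (PresentedGroup.mk (racgRels Γ) y))
    (pullback_cocycle _ (cupSum Γ (Finset.univ ×ˢ Finset.univ) Prod.fst Prod.snd g).2)
  have hf1' : ∀ x y, (cupSum Γ (Finset.univ ×ˢ Finset.univ) Prod.fst Prod.snd g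
      : RACG Γ → RACG Γ → ZMod 2)
      (PresentedGroup.mk (racgRels Γ) x) (PresentedGroup.mk (racgRels Γ) y)
      = f1 x - f1 (x * y) + f1 y := hf1
  obtain ⟨hone1, hcom1, hsq1⟩ :=
    cupSum_vals Γ (Finset.univ ×ˢ Finset.univ) Prod.fst Prod.snd g f1 hf1'
  obtain ⟨f2, hf2⟩ := free_cobound
    (fun x y => (cupSum Γ Finset.univ id id εa : RACG Γ → RACG Γ → ZMod 2)
      (PresentedGroup.mk (racgRels Γ) x) (PresentedGroup.mk (racgRels Γ) y))
    (pullback_cocycle _ (cupSum Γ Finset.univ id id εa).2)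
  have hf2' : ∀ x y, (cupSum Γ Finset.univ id id εa : RACG Γ → RACG Γ → ZMod 2)
      (PresentedGroup.mk (racgRels Γ) x) (PresentedGroup.mk (racgRels Γ) y)
      = f2 x - f2 (x * y) + f2 y := hf2
  obtain ⟨hone2, hcom2, hsq2⟩ := cupSum_vals Γ Finset.univ id id εa f2 hf2'
  simp only [id_eq] at hcom2 hsq2
  have hmem : ∀ p : V × V, p ∈ Finset.univ ×ˢ (Finset.univ : Finset V) := by
    intro p
    simp [Finset.mem_product]
  refine key_eq _ _ f1 f2 hf1' hf2' ?_
  rintro r (⟨v, w, hvw, rfl⟩ | ⟨v, rfl⟩)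
  · erw [hone1, hone2, hcom1 v w, hcom2 v w, sum_diag0 εa v w, sum_dd_split, sum_dd, sum_dd,
      if_pos (hmem (w, v)), if_pos (hmem (v, w))]
    simp only [hg]
    ring
  · erw [hone1, hone2, hsq1 v, hsq2 v, sum_diag εa v, sum_dd, if_pos (hmem (v, v))]
    simp only [hg]
    exact congrArg₂ (· - ·) (zms (εa v)) rfl

end RRX
end Mach9

open RRX in
/-- `H²(C(Γ); ℤ/2) ≅ H²(A(Γ); ℤ/2) ⊕ (ℤ/2)^{|V(Γ)|}`: the map
`H²(C(Γ); ℤ/2) → H²(A(Γ); ℤ/2)` induced by the natural surjection `A(Γ) → C(Γ)` is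
surjective, its kernel `Σ` is precisely the image of the squaring map `a ↦ a ⌣ a`
on `H¹(C(Γ); ℤ/2)`, and `Σ ≅ (ℤ/2)^{|V(Γ)|}`. -/
theorem h2_racg_decomposition {V : Type} [Fintype V] [DecidableEq V] (Γ : SimpleGraph V) :
    Function.Surjective (H2map (k := ZMod 2) (raagToRacg Γ)) ∧
    (LinearMap.ker (H2map (k := ZMod 2) (raagToRacg Γ)) : Set (H2 (ZMod 2) (RACG Γ))) =
      Set.range (fun a : H1 (ZMod 2) (RACG Γ) => cup (ZMod 2) (RACG Γ) a a) ∧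
    Module.finrank (ZMod 2) (LinearMap.ker (H2map (k := ZMod 2) (raagToRacg Γ))) =
      Fintype.card V := by
  classical
  letI : LinearOrder V := LinearOrder.lift' (Fintype.equivFin V) (Equiv.injective _)
  have hH : ∀ (z : twoCocycles (ZMod 2) (RACG Γ)),
      H2map (k := ZMod 2) (raagToRacg Γ) (Submodule.Quotient.mk z)
        = Submodule.Quotient.mk (twoCocyclesMap (raagToRacg Γ) z) := fun z => rfl
  have hcup : ∀ a : H1 (ZMod 2) (RACG Γ), cup (ZMod 2) (RACG Γ) a a
      = Submodule.Quotient.mk (cupCocycle a a) := fun a => rfl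
  refine ⟨?_, ?_, ?_⟩
  · -- surjectivity
    intro y
    obtain ⟨d, rfl⟩ := Submodule.Quotient.mk_surjective _ y
    obtain ⟨fA, hfA⟩ := free_cobound
      (fun x y => (d : RAAG Γ → RAAG Γ → ZMod 2)
        (PresentedGroup.mk (raagRels Γ) x) (PresentedGroup.mk (raagRels Γ) y))
      (pullback_cocycle _ d.2)
    have hfA' : ∀ x y, (d : RAAG Γ → RAAG Γ → ZMod 2)
        (PresentedGroup.mk (raagRels Γ) x) (PresentedGroup.mk (raagRels Γ) y)
        = fA x - fA (x * y) + fA y := hfA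
    set μ : V × V → ZMod 2 :=
      fun p => fA ⁅FreeGroup.of p.1, FreeGroup.of p.2⁆
        - (d : RAAG Γ → RAAG Γ → ZMod 2) 1 1 with hμ
    set P : Finset (V × V) :=
      Finset.univ.filter (fun p : V × V => p.1 < p.2 ∧ Γ.Adj p.1 p.2) with hP
    set CS := cupSum Γ P Prod.fst Prod.snd μ with hCS
    refine ⟨Submodule.Quotient.mk CS, ?_⟩
    rw [hH]
    obtain ⟨f0, hf0⟩ := free_cobound
      (fun x y => (CS : RACG Γ → RACG Γ → ZMod 2)
        (PresentedGroup.mk (racgRels Γ) x) (PresentedGroup.mk (racgRels Γ) y))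
      (pullback_cocycle _ CS.2)
    have hf0' : ∀ x y, (CS : RACG Γ → RACG Γ → ZMod 2)
        (PresentedGroup.mk (racgRels Γ) x) (PresentedGroup.mk (racgRels Γ) y)
        = f0 x - f0 (x * y) + f0 y := hf0
    obtain ⟨hone, hcom, _⟩ := cupSum_vals Γ P Prod.fst Prod.snd μ f0 hf0'
    have h0 : ((twoCocyclesMap (raagToRacg Γ) CS : twoCocycles (ZMod 2) (RAAG Γ))
        : RAAG Γ → RAAG Γ → ZMod 2) 1 1 = 0 := by
      rw [pullA_one]
      exact hone
    refine key_eq (rels := raagRels Γ) (twoCocyclesMap (raagToRacg Γ) CS) d f0 fA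
      (pullA Γ hf0') hfA' ?_
    rintro r ⟨v, w, hvw, rfl⟩
    erw [h0, sub_zero, hcom v w, sum_dd_split, sum_dd, sum_dd]
    have hmemP : ∀ u₁ u₂ : V, ((u₁, u₂) ∈ P) ↔ (u₁ < u₂ ∧ Γ.Adj u₁ u₂) := by
      intro u₁ u₂
      simp [hP]
    have hne : v ≠ w := Γ.ne_of_adj hvw
    have hsymmμ : μ (w, v) = μ (v, w) := by
      have hrel : PresentedGroup.mk (raagRels Γ) ⁅FreeGroup.of v, FreeGroup.of w⁆ = 1 :=
        (QuotientGroup.eq_one_iff _).mpr (Subgroup.subset_normalClosure ⟨v, w, hvw, rfl⟩)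
      have h4 := ML4 (hc := d.2) (hf := hfA') ⁅FreeGroup.of v, FreeGroup.of w⁆ hrel
      rw [commutatorElement_inv] at h4
      show fA ⁅FreeGroup.of w, FreeGroup.of v⁆ - (d : RAAG Γ → RAAG Γ → ZMod 2) 1 1 = _
      rw [h4]
      exact zneg _
    show (if (w, v) ∈ P then μ (w, v) else 0) - (if (v, w) ∈ P then μ (v, w) else 0)
      = fA ⁅FreeGroup.of v, FreeGroup.of w⁆ - (d : RAAG Γ → RAAG Γ → ZMod 2) 1 1
    rcases lt_or_gt_of_ne hne with hlt | hgt
    · rw [if_neg (fun hc => lt_asymm hlt ((hmemP w v).mp hc).1),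
        if_pos ((hmemP v w).mpr ⟨hlt, hvw⟩), zero_sub]
      exact zneg _
    · rw [if_pos ((hmemP w v).mpr ⟨hgt, hvw.symm⟩),
        if_neg (fun hc => lt_asymm hgt ((hmemP v w).mp hc).1), sub_zero]
      exact hsymmμ
  · -- kernel = squares
    apply Set.eq_of_subset_of_subset
    · intro x hx
      have hx' : H2map (k := ZMod 2) (raagToRacg Γ) x = 0 :=
        LinearMap.mem_ker.mp (SetLike.mem_coe.mp hx)
      obtain ⟨c, rfl⟩ := Submodule.Quotient.mk_surjective _ x
      obtain ⟨f, hf⟩ := free_cobound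
        (fun x y => (c : RACG Γ → RACG Γ → ZMod 2)
          (PresentedGroup.mk (racgRels Γ) x) (PresentedGroup.mk (racgRels Γ) y))
        (pullback_cocycle _ c.2)
      have hf' : ∀ x y, (c : RACG Γ → RACG Γ → ZMod 2)
          (PresentedGroup.mk (racgRels Γ) x) (PresentedGroup.mk (racgRels Γ) y)
          = f x - f (x * y) + f y := hf
      have hrep := ker_rep Γ c f hf' hx'
      set ε : V → ZMod 2 :=
        fun v => f (FreeGroup.of v ^ 2) - (c : RACG Γ → RACG Γ → ZMod 2) 1 1 with hε
      set a : H1 (ZMod 2) (RACG Γ) := ∑ v : V, ε v • racgDual Γ v with ha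
      have haval : (fun v => a.1 (PresentedGroup.of v)) = ε := by
        funext w
        show (↑(∑ v : V, ε v • racgDual Γ v) : RACG Γ → ZMod 2) (PresentedGroup.of w) = ε w
        erw [Submodule.coe_sum, Finset.sum_apply]
        rw [Finset.sum_congr rfl (g := fun v => if w = v then ε v else 0) (fun v _ => by
          erw [SetLike.val_smul, Pi.smul_apply, smul_eq_mul,
            show ((racgDual Γ v : RACG Γ → ZMod 2) (PresentedGroup.of w)) = dv v w from
              racgDual_of Γ v w, dv]
          by_cases h : w = v <;> simp [h]), Finset.sum_ite_eq]
        simp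
      refine ⟨a, ?_⟩
      show cup (ZMod 2) (RACG Γ) a a = _
      rw [hcup a, cup_self_class Γ a, haval]
      exact hrep.symm
    · rintro x ⟨a, rfl⟩
      apply SetLike.mem_coe.mpr
      rw [LinearMap.mem_ker]
      dsimp only
      rw [hcup a, cup_self_class Γ a]
      exact sq_mem_ker Γ _
  · -- rank
    set σ' : (V → ZMod 2) →ₗ[ZMod 2]
        LinearMap.ker (H2map (k := ZMod 2) (raagToRacg Γ)) :=
      LinearMap.codRestrict _ (sqMap Γ) (fun ε => by
        rw [LinearMap.mem_ker]
        show H2map (k := ZMod 2) (raagToRacg Γ)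
          (Submodule.Quotient.mk (cupSum Γ Finset.univ id id ε)) = 0
        exact sq_mem_ker Γ ε) with hσ'
    have hinj : Function.Injective σ' := by
      refine (injective_iff_map_eq_zero σ').mpr ?_
      intro ε hε0
      refine sq_inj Γ ε ?_
      have h1 : (σ' ε : H2 (ZMod 2) (RACG Γ)) = 0 := by rw [hε0]; rfl
      exact h1
    have hsurj : Function.Surjective σ' := by
      rintro ⟨x, hx⟩
      rw [LinearMap.mem_ker] at hx
      obtain ⟨c, rfl⟩ := Submodule.Quotient.mk_surjective _ x
      obtain ⟨f, hf⟩ := free_cobound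
        (fun x y => (c : RACG Γ → RACG Γ → ZMod 2)
          (PresentedGroup.mk (racgRels Γ) x) (PresentedGroup.mk (racgRels Γ) y))
        (pullback_cocycle _ c.2)
      have hf' : ∀ x y, (c : RACG Γ → RACG Γ → ZMod 2)
          (PresentedGroup.mk (racgRels Γ) x) (PresentedGroup.mk (racgRels Γ) y)
          = f x - f (x * y) + f y := hf
      refine ⟨fun v => f (FreeGroup.of v ^ 2) - (c : RACG Γ → RACG Γ → ZMod 2) 1 1,
        Subtype.ext ?_⟩
      exact (ker_rep Γ c f hf' hx).symm
    have e : (V → ZMod 2) ≃ₗ[ZMod 2]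
        LinearMap.ker (H2map (k := ZMod 2) (raagToRacg Γ)) :=
      LinearEquiv.ofBijective σ' ⟨hinj, hsurj⟩
    rw [← LinearEquiv.finrank_eq e]
    exact Module.finrank_fintype_fun_eq_card (ZMod 2)
end

section
/- Let Γ be a finite graph, w a vertex of Γ, and let w*: C(Γ) → Z/2 be the homomorphism sending w to 1 and all other generators to 0. Then the group P presented by ⟨V(Γ) | [u,v]=1 for edges (u,v), v²=1 for v ≠ w, w⁴=1, w² central⟩ is a central extension of C(Γ) by Z/2 (kernel generated by w²); moreover the homomorphism P → Z/4 killing all generators except w (and sending w to 1) restricts injectively to this central Z/2, so the kernel Z/2 injects into the pro-2 completion of P. -/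
open scoped commutatorElement

/-- The relations of the extension group `P`: edge commutators, `v² = 1` for `v ≠ w`,
`w⁴ = 1`, and `w²` central (it commutes with every generator). -/
def pExtRels {V : Type} (Γ : SimpleGraph V) (w : V) : Set (FreeGroup V) :=
  raagRels Γ ∪ {r | ∃ v : V, v ≠ w ∧ r = (FreeGroup.of v) ^ 2}
    ∪ {(FreeGroup.of w) ^ 4}
    ∪ {r | ∃ u : V, r = ⁅(FreeGroup.of w) ^ 2, FreeGroup.of u⁆}

/-- The group `P = ⟨V(Γ) | [u,v]=1 for edges, v²=1 for v ≠ w, w⁴=1, w² central⟩`. -/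
def PExt {V : Type} (Γ : SimpleGraph V) (w : V) : Type := PresentedGroup (pExtRels Γ w)

instance {V : Type} (Γ : SimpleGraph V) (w : V) : Group (PExt Γ w) :=
  QuotientGroup.Quotient.group _


section PExtAux

variable {V : Type} (Γ : SimpleGraph V) (w : V)

lemma mk_rel_eq_one {α : Type*} {rels : Set (FreeGroup α)} {r : FreeGroup α} (h : r ∈ rels) :
    PresentedGroup.mk rels r = 1 :=
  (QuotientGroup.eq_one_iff r).2 (Subgroup.subset_normalClosure h)

lemma racg_sq (v : V) : (RACG.gen Γ v) ^ 2 = 1 := by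
  have : (RACG.gen Γ v) ^ 2 = PresentedGroup.mk (racgRels Γ) ((FreeGroup.of v) ^ 2) := by
    rw [map_pow]; rfl
  erw [this]
  exact mk_rel_eq_one (Or.inr ⟨v, rfl⟩)

lemma racg_comm {u v : V} (h : Γ.Adj u v) : ⁅RACG.gen Γ u, RACG.gen Γ v⁆ = 1 := by
  have : ⁅RACG.gen Γ u, RACG.gen Γ v⁆
      = PresentedGroup.mk (racgRels Γ) ⁅FreeGroup.of u, FreeGroup.of v⁆ := by
    rw [map_commutatorElement]; rfl
  rw [this]
  exact mk_rel_eq_one (Or.inl ⟨u, v, h, rfl⟩)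

lemma pext_comm {u v : V} (h : Γ.Adj u v) :
    ⁅(PresentedGroup.of u : PExt Γ w), (PresentedGroup.of v : PExt Γ w)⁆ = 1 := by
  have : ⁅(PresentedGroup.of u : PExt Γ w), (PresentedGroup.of v : PExt Γ w)⁆
      = PresentedGroup.mk (pExtRels Γ w) ⁅FreeGroup.of u, FreeGroup.of v⁆ := by
    rw [map_commutatorElement]; rfl
  rw [this]
  exact mk_rel_eq_one (Or.inl (Or.inl (Or.inl ⟨u, v, h, rfl⟩)))

lemma pext_sq {v : V} (h : v ≠ w) : (PresentedGroup.of v : PExt Γ w) ^ 2 = 1 := by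
  have : (PresentedGroup.of v : PExt Γ w) ^ 2
      = PresentedGroup.mk (pExtRels Γ w) ((FreeGroup.of v) ^ 2) := by
    rw [map_pow]; rfl
  rw [this]
  exact mk_rel_eq_one (Or.inl (Or.inl (Or.inr ⟨v, h, rfl⟩)))

lemma pext_w4 : (PresentedGroup.of w : PExt Γ w) ^ 4 = 1 := by
  have : (PresentedGroup.of w : PExt Γ w) ^ 4
      = PresentedGroup.mk (pExtRels Γ w) ((FreeGroup.of w) ^ 4) := by
    rw [map_pow]; rfl
  rw [this]
  exact mk_rel_eq_one (Or.inl (Or.inr rfl))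

lemma pext_comm_w2 (u : V) :
    ⁅(PresentedGroup.of w : PExt Γ w) ^ 2, (PresentedGroup.of u : PExt Γ w)⁆ = 1 := by
  have : ⁅(PresentedGroup.of w : PExt Γ w) ^ 2, (PresentedGroup.of u : PExt Γ w)⁆
      = PresentedGroup.mk (pExtRels Γ w) ⁅(FreeGroup.of w) ^ 2, FreeGroup.of u⁆ := by
    rw [map_commutatorElement, map_pow]; rfl
  rw [this]
  exact mk_rel_eq_one (Or.inr ⟨u, rfl⟩)

lemma pext_w2_sq : ((PresentedGroup.of w : PExt Γ w) ^ 2) ^ 2 = 1 := by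
  rw [← pow_mul]
  exact pext_w4 Γ w

lemma pext_w2_center :
    ((PresentedGroup.of w : PExt Γ w) ^ 2) ∈ Subgroup.center (PExt Γ w) := by
  refine Subgroup.mem_center_iff.2 fun g => ?_
  have hg : g ∈ Subgroup.centralizer {(PresentedGroup.of w : PExt Γ w) ^ 2} := by
    refine PresentedGroup.generated_by _ _ (fun u => ?_) g
    rw [Subgroup.mem_centralizer_iff]
    rintro h rfl
    exact (commutatorElement_eq_one_iff_mul_comm.1 (pext_comm_w2 Γ w u))
  exact (Subgroup.mem_centralizer_iff.1 hg _ rfl).symm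

lemma pi_rels : ∀ r ∈ pExtRels Γ w, FreeGroup.lift (RACG.gen Γ) r = 1 := by
  rintro r (((⟨u, v, huv, rfl⟩ | ⟨v, -, rfl⟩) | rfl) | ⟨u, rfl⟩)
  · rw [map_commutatorElement, FreeGroup.lift_apply_of, FreeGroup.lift_apply_of]
    exact racg_comm Γ huv
  · rw [map_pow, FreeGroup.lift_apply_of]; exact racg_sq Γ v
  · rw [map_pow, FreeGroup.lift_apply_of, show (4 : ℕ) = 2 * 2 from rfl, pow_mul,
      racg_sq, one_pow]
  · rw [map_commutatorElement, map_pow, FreeGroup.lift_apply_of, FreeGroup.lift_apply_of,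
      racg_sq]
    simp [commutatorElement_def]

end PExtAux

/-- The group `P` above is a central extension of `C(Γ)` by `ℤ/2`,
with kernel generated by `w²`; the homomorphism `P → ℤ/4` sending `w ↦ 1` and killing
all other generators restricts injectively to this central `ℤ/2`; consequently the
kernel injects into the pro-`2` completion of `P`. -/
theorem pExt_central_extension {V : Type} [Fintype V] [DecidableEq V]
    (Γ : SimpleGraph V) (w : V) :
    ∃ π : PExt Γ w →* RACG Γ,
      (∀ u : V, π (PresentedGroup.of u) = RACG.gen Γ u) ∧
      Function.Surjective π ∧
      π.ker = Subgroup.closure {(PresentedGroup.of w : PExt Γ w) ^ 2} ∧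
      π.ker ≤ Subgroup.center (PExt Γ w) ∧
      Nat.card π.ker = 2 ∧
      (∃ χ : PExt Γ w →* Multiplicative (ZMod 4),
        χ (PresentedGroup.of w) = Multiplicative.ofAdd (1 : ZMod 4) ∧
        (∀ u : V, u ≠ w → χ (PresentedGroup.of u) = 1) ∧
        Set.InjOn χ (π.ker : Set (PExt Γ w))) ∧
      ∀ (K : Type) [Group K] [TopologicalSpace K] (ι : PExt Γ w →* K),
        IsProPCompletion 2 (PExt Γ w) K ι → Set.InjOn ι (π.ker : Set (PExt Γ w)) := by
  classical
  set a : PExt Γ w := (PresentedGroup.of w : PExt Γ w) ^ 2 with ha_def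
  have ha2 : a ^ 2 = 1 := pext_w2_sq Γ w
  have hacen : a ∈ Subgroup.center (PExt Γ w) := pext_w2_center Γ w
  -- the projection π
  set π : PExt Γ w →* RACG Γ := PresentedGroup.toGroup (pi_rels Γ w) with hπ_def
  have hof : ∀ u : V, π (PresentedGroup.of u) = RACG.gen Γ u := fun u =>
    PresentedGroup.toGroup.of (pi_rels Γ w)
  have hsurj : Function.Surjective π := by
    intro x
    exact PresentedGroup.generated_by (racgRels Γ) π.range
      (fun u => ⟨PresentedGroup.of u, hof u⟩) x
  -- the character χ
  have hχrels : ∀ r ∈ pExtRels Γ w,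
      FreeGroup.lift (fun u : V => if u = w then
        (Multiplicative.ofAdd (1 : ZMod 4)) else 1) r = 1 := by
    rintro r (((⟨u, v, huv, rfl⟩ | ⟨v, hv, rfl⟩) | rfl) | ⟨u, rfl⟩)
    · rw [map_commutatorElement]
      exact commutatorElement_eq_one_iff_mul_comm.2 (mul_comm _ _)
    · rw [map_pow, FreeGroup.lift_apply_of, if_neg hv, one_pow]
    · rw [map_pow, FreeGroup.lift_apply_of, if_pos rfl]
      decide
    · rw [map_commutatorElement]
      exact commutatorElement_eq_one_iff_mul_comm.2 (mul_comm _ _)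
  set χ : PExt Γ w →* Multiplicative (ZMod 4) := PresentedGroup.toGroup hχrels with hχ_def
  have hχw : χ (PresentedGroup.of w) = Multiplicative.ofAdd (1 : ZMod 4) :=
    (PresentedGroup.toGroup.of hχrels).trans (if_pos rfl)
  have hχa : χ a = Multiplicative.ofAdd (2 : ZMod 4) := by
    erw [ha_def, map_pow, hχw]; decide
  have ha_ne : a ≠ 1 := by
    intro h
    have : χ a = 1 := by rw [h, map_one]
    rw [hχa] at this
    exact absurd this (by decide)
  -- the central subgroup N
  set N : Subgroup (PExt Γ w) := Subgroup.closure {a} with hN_def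
  have hNle : N ≤ Subgroup.center (PExt Γ w) := by
    rw [hN_def, Subgroup.closure_le]
    simpa using hacen
  have hNnormal : N.Normal := by
    constructor
    intro n hn g
    have h := Subgroup.mem_center_iff.1 (hNle hn) g
    rw [h, mul_assoc, mul_inv_cancel, mul_one]
    exact hn
  -- elements of N
  have hN2 : Subgroup.zpowers a = N := by rw [hN_def, Subgroup.zpowers_eq_closure]
  have ha2' : a ^ (2 : ℤ) = 1 := by
    rw [show (2 : ℤ) = ((2 : ℕ) : ℤ) from rfl, zpow_natCast]; exact ha2
  have hmemN : ∀ x ∈ N, x = 1 ∨ x = a := by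
    intro x hx
    rw [← hN2, Subgroup.mem_zpowers_iff] at hx
    obtain ⟨n, rfl⟩ := hx
    have key : a ^ n = a ^ (n % 2) := by
      conv_lhs => rw [← Int.mul_ediv_add_emod n 2]
      rw [zpow_add, zpow_mul, ha2', one_zpow, one_mul]
    rcases Int.emod_two_eq n with h | h
    · left; rw [key, h, zpow_zero]
    · right; rw [key, h, zpow_one]
  -- ker π = N
  have hρrels : ∀ r ∈ racgRels Γ,
      FreeGroup.lift (fun u : V =>
        (QuotientGroup.mk' N) (PresentedGroup.of u : PExt Γ w)) r = 1 := by
    rintro r (⟨u, v, huv, rfl⟩ | ⟨v, rfl⟩)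
    · erw [map_commutatorElement, FreeGroup.lift_apply_of, FreeGroup.lift_apply_of,
        ← map_commutatorElement, pext_comm Γ w huv, map_one]
    · erw [map_pow, FreeGroup.lift_apply_of, ← map_pow]
      by_cases hv : v = w
      · subst hv
        erw [← ha_def]
        exact (QuotientGroup.eq_one_iff a).2 (Subgroup.subset_closure rfl)
      · erw [pext_sq Γ w hv, map_one]
  set ρ : RACG Γ →* PExt Γ w ⧸ N := PresentedGroup.toGroup hρrels with hρ_def
  have hcomp : ρ.comp π = QuotientGroup.mk' N := by
    refine PresentedGroup.ext fun u => ?_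
    show ρ (π (PresentedGroup.of u)) = (QuotientGroup.mk' N) (PresentedGroup.of u)
    rw [hof u]
    exact PresentedGroup.toGroup.of hρrels
  have hker : π.ker = N := by
    apply le_antisymm
    · intro g hg
      have h1 : (QuotientGroup.mk' N) g = 1 := by
        rw [← hcomp, MonoidHom.comp_apply, hg, map_one]
      exact (QuotientGroup.eq_one_iff g).1 h1
    · rw [hN_def, Subgroup.closure_le]
      intro x hx
      rcases hx with rfl
      show π a = 1
      erw [ha_def, map_pow, hof w]
      exact racg_sq Γ w
  have hcent : π.ker ≤ Subgroup.center (PExt Γ w) := hker ▸ hNle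
  have hcard : Nat.card π.ker = 2 := by
    have : π.ker = Subgroup.zpowers a := by rw [hker, hN2]
    rw [this, Nat.card_zpowers]
    exact orderOf_eq_prime ha2 ha_ne
  have hinj : Set.InjOn χ (π.ker : Set (PExt Γ w)) := by
    intro x hx y hy hxy
    have hx' := hmemN x (hker ▸ hx)
    have hy' := hmemN y (hker ▸ hy)
    have hne : χ a ≠ 1 := by rw [hχa]; decide
    rcases hx' with rfl | rfl <;> rcases hy' with rfl | rfl
    · rfl
    · exact absurd (by rw [← hxy, map_one]) hne
    · exact absurd (by rw [hxy, map_one]) hne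
    · rfl
  refine ⟨π, hof, hsurj, hker, hcent, hcard, ⟨χ, hχw, ?_, hinj⟩, ?_⟩
  · intro u hu
    exact (PresentedGroup.toGroup.of hχrels).trans (if_neg hu)
  · intro K _ _ ι hcompl
    letI : TopologicalSpace (Multiplicative (ZMod 4)) := ⊥
    haveI : DiscreteTopology (Multiplicative (ZMod 4)) := ⟨rfl⟩
    have hp : IsPGroup 2 (Multiplicative (ZMod 4)) := by
      refine IsPGroup.of_card (n := 2) ?_
      rw [Nat.card_eq_fintype_card]
      rfl
    obtain ⟨φ, ⟨hφc, hφ⟩, -⟩ := hcompl.universal (Multiplicative (ZMod 4)) hp χ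
    intro x hx y hy hxy
    refine hinj hx hy ?_
    have : ∀ z, χ z = φ (ι z) := fun z => by rw [← hφ]; rfl
    rw [this x, this y, hxy]
end
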